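/- arXiv:2006.03137 — 11 statements merged into one kernel-verified Lean document; each statement's English description precedes it below -/
import Mathlib

section
/- For all indices i, j ∈ {1, …, d} one has V_i P V_j = V_j P V_i. Consequently, for every t ∈ [0,1] the operators P^t V_1 P^{1−t}, …, P^t V_d P^{1−t} pairwise commute; that is, the generalized spherical Aluthge transform Δ_t(T) is again a commuting d-tuple. -/
open scoped NNReal InnerProductSpace
open ContinuousLinearMap in
theorem spherical_aluthge_commutes
    {H : Type*} [NormedAddCommGroup H] [InnerProductSpace ℂ H] [CompleteSpace H]
    {d : ℕ} (hd : 1 ≤ d) (T V : Fin d → H →L[ℂ] H) (P : H →L[ℂ] H)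
    (hcomm : ∀ i j, T i * T j = T j * T i)
    (hPpos : 0 ≤ P)
    (hP2 : P * P = ∑ i, star (T i) * T i)
    (hpolar : ∀ i, T i = V i * P)
    (hproj : ∑ i, star (V i) * V i =
      ((LinearMap.ker (P : H →ₗ[ℂ] H))ᗮ).subtypeL.comp
        (Submodule.orthogonalProjectionOnto (LinearMap.ker (P : H →ₗ[ℂ] H))ᗮ)) :
    (∀ i j, V i * P * V j = V j * P * V i) ∧
      ∀ t : ℝ, 0 ≤ t → t ≤ 1 → ∀ i j,
        (CFC.rpow P t * V i * CFC.rpow P (1 - t)) * (CFC.rpow P t * V j * CFC.rpow P (1 - t)) =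
          (CFC.rpow P t * V j * CFC.rpow P (1 - t)) * (CFC.rpow P t * V i * CFC.rpow P (1 - t)) := by
  have hPsa : IsSelfAdjoint P :=
    ((ContinuousLinearMap.nonneg_iff_isPositive P).mp hPpos).isSelfAdjoint
  have hswap : ∀ a b : H, ⟪P a, b⟫_ℂ = ⟪a, P b⟫_ℂ := by
    intro a b
    have h := ContinuousLinearMap.adjoint_inner_left P b a
    rwa [hPsa.adjoint_eq] at h
  -- each V i vanishes on ker P
  have hVker : ∀ i, ∀ x ∈ LinearMap.ker (P : H →ₗ[ℂ] H), V i x = 0 := by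
    intro i x hx
    have hx' : x ∈ ((LinearMap.ker (P : H →ₗ[ℂ] H))ᗮ)ᗮ := (LinearMap.ker (P : H →ₗ[ℂ] H)).le_orthogonal_orthogonal hx
    have hproj0 : (Submodule.orthogonalProjectionOnto (LinearMap.ker (P : H →ₗ[ℂ] H))ᗮ x : H) = 0 := by
      rw [Submodule.orthogonalProjectionOnto_apply_of_mem_orthogonal hx']
      rfl
    have hsum : ∑ k, ⟪V k x, V k x⟫_ℂ = 0 := by
      have h1 : ∀ k : Fin d, ⟪V k x, V k x⟫_ℂ = ⟪(star (V k) * V k) x, x⟫_ℂ := by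
        intro k
        rw [ContinuousLinearMap.mul_apply, ContinuousLinearMap.star_eq_adjoint,
          ContinuousLinearMap.adjoint_inner_left]
      calc ∑ k, ⟪V k x, V k x⟫_ℂ = ∑ k, ⟪(star (V k) * V k) x, x⟫_ℂ := by
            exact Finset.sum_congr rfl fun k _ => h1 k
        _ = ⟪(∑ k, star (V k) * V k) x, x⟫_ℂ := by
            rw [ContinuousLinearMap.sum_apply, sum_inner]
        _ = 0 := by
            rw [hproj]
            simp [hproj0]
    have hre : ∑ k, (‖V k x‖ ^ 2 : ℝ) = 0 := by
      have h2 : ∑ k, ((‖V k x‖ ^ 2 : ℝ) : ℂ) = 0 := by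
        rw [← hsum]
        refine Finset.sum_congr rfl fun k _ => ?_
        rw [inner_self_eq_norm_sq_to_K]
        push_cast
        rfl
      exact_mod_cast h2
    have hterm : (‖V i x‖ ^ 2 : ℝ) = 0 := by
      have := (Finset.sum_eq_zero_iff_of_nonneg (fun k _ => sq_nonneg (‖V k x‖))).mp hre
      exact this i (Finset.mem_univ i)
    have : ‖V i x‖ = 0 := by
      nlinarith [norm_nonneg (V i x)]
    exact norm_eq_zero.mp this
  -- key vanishing lemma
  have key : ∀ A : H →L[ℂ] H, A * P = 0 → (∀ x ∈ LinearMap.ker (P : H →ₗ[ℂ] H), A x = 0) → A = 0 := by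
    intro A hAP hAker
    have hkerclosed : IsClosed ((LinearMap.ker (P : H →ₗ[ℂ] H) : Submodule ℂ H) : Set H) :=
      ContinuousLinearMap.isClosed_ker P
    have hrange : LinearMap.range (P : H →ₗ[ℂ] H) ≤ LinearMap.ker (A : H →ₗ[ℂ] H) := by
      rintro _ ⟨y, rfl⟩
      have := ContinuousLinearMap.ext_iff.mp hAP y
      simpa [ContinuousLinearMap.mul_apply] using this
    have horth : (LinearMap.range (P : H →ₗ[ℂ] H))ᗮ = LinearMap.ker (P : H →ₗ[ℂ] H) := by
      ext x
      simp only [Submodule.mem_orthogonal, LinearMap.mem_range, LinearMap.mem_ker,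
        ContinuousLinearMap.coe_coe]
      constructor
      · intro h
        have h2 : ⟪P x, P x⟫_ℂ = 0 := by
          have := h (P (P x)) ⟨P x, rfl⟩
          rwa [hswap (P x) x] at this
        exact inner_self_eq_zero.mp h2
      · rintro hx u ⟨y, rfl⟩
        rw [hswap y x, hx, inner_zero_right]
    have hclos : (LinearMap.ker (P : H →ₗ[ℂ] H))ᗮ ≤ LinearMap.ker (A : H →ₗ[ℂ] H) := by
      rw [← horth, Submodule.orthogonal_orthogonal_eq_closure]
      exact Submodule.topologicalClosure_minimal _ hrange (ContinuousLinearMap.isClosed_ker A)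
    haveI : CompleteSpace (LinearMap.ker (P : H →ₗ[ℂ] H)) := hkerclosed.completeSpace_coe
    ext x
    have hx1 : (Submodule.orthogonalProjectionOnto (LinearMap.ker (P : H →ₗ[ℂ] H))ᗮ x : H) ∈ (LinearMap.ker (P : H →ₗ[ℂ] H))ᗮ :=
      Submodule.coe_mem _
    have hx2 : x - Submodule.orthogonalProjectionOnto (LinearMap.ker (P : H →ₗ[ℂ] H))ᗮ x ∈ ((LinearMap.ker (P : H →ₗ[ℂ] H))ᗮ)ᗮ :=
      Submodule.sub_starProjection_mem_orthogonal x
    rw [Submodule.orthogonal_orthogonal] at hx2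
    have h1 : A (x - Submodule.orthogonalProjectionOnto (LinearMap.ker (P : H →ₗ[ℂ] H))ᗮ x) = 0 := hAker _ hx2
    have h2 : A ((Submodule.orthogonalProjectionOnto (LinearMap.ker (P : H →ₗ[ℂ] H))ᗮ x : H)) = 0 := hclos hx1
    have : A x = A (x - Submodule.orthogonalProjectionOnto (LinearMap.ker (P : H →ₗ[ℂ] H))ᗮ x) +
        A ((Submodule.orthogonalProjectionOnto (LinearMap.ker (P : H →ₗ[ℂ] H))ᗮ x : H)) := by
      rw [← map_add]
      congr 1
      abel
    rw [ContinuousLinearMap.zero_apply, this, h1, h2, add_zero]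
  -- part 1
  have part1 : ∀ i j, V i * P * V j = V j * P * V i := by
    intro i j
    have hAP : (V i * P * V j - V j * P * V i) * P = 0 := by
      have h := hcomm i j
      rw [hpolar i, hpolar j] at h
      rw [sub_mul]
      simp only [mul_assoc] at h ⊢
      rw [h, sub_self]
    have hAker : ∀ x ∈ LinearMap.ker (P : H →ₗ[ℂ] H), (V i * P * V j - V j * P * V i) x = 0 := by
      intro x hx
      simp [ContinuousLinearMap.sub_apply, ContinuousLinearMap.mul_apply,
        hVker i x hx, hVker j x hx]
    have := key _ hAP hAker
    rwa [sub_eq_zero] at this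
  refine ⟨part1, ?_⟩
  -- the multiplication rule for rpow
  have hmul : ∀ t : ℝ, 0 ≤ t → t ≤ 1 → CFC.rpow P (1 - t) * CFC.rpow P t = P := by
    intro t ht0 ht1
    rw [show CFC.rpow P (1 - t) = cfc (fun x : ℝ≥0 => x ^ (1 - t)) P from rfl,
      show CFC.rpow P t = cfc (fun x : ℝ≥0 => x ^ t) P from rfl,
      ← cfc_mul (fun x : ℝ≥0 => x ^ (1 - t)) (fun x : ℝ≥0 => x ^ t) P
        ((NNReal.continuous_rpow_const (by linarith)).continuousOn)
        ((NNReal.continuous_rpow_const ht0).continuousOn)]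
    conv_rhs => rw [← cfc_id ℝ≥0 P hPpos]
    apply cfc_congr
    intro x _
    show x ^ (1 - t) * x ^ t = x
    rcases eq_or_ne x 0 with rfl | hx0
    · rcases eq_or_lt_of_le ht0 with rfl | ht
      · norm_num
      · rw [NNReal.zero_rpow (ne_of_gt ht), mul_zero]
    · rw [← NNReal.rpow_add hx0, sub_add_cancel, NNReal.rpow_one]
  intro t ht0 ht1 i j
  have hm : ∀ X : H →L[ℂ] H, CFC.rpow P (1 - t) * (CFC.rpow P t * X) = P * X := by
    intro X
    rw [← mul_assoc, hmul t ht0 ht1]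
  have hcollapse : ∀ W W' : H →L[ℂ] H,
      (CFC.rpow P t * W * CFC.rpow P (1 - t)) * (CFC.rpow P t * W' * CFC.rpow P (1 - t)) =
        CFC.rpow P t * (W * P * W') * CFC.rpow P (1 - t) := by
    intro W W'
    simp only [mul_assoc, hm]
  rw [hcollapse, hcollapse, part1 i j]
end

section
/- Let 0 < t ≤ 1. If Δ_t(T) = T, i.e. P^t V_i P^{1−t} = T_i for every i ∈ {1, …, d}, then P commutes with V_i for every i (equivalently, P commutes with each T_i); that is, the fixed points of the generalized spherical Aluthge transform are exactly the spherically quasinormal d-tuples. -/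
open scoped NNReal ContinuousFunctionalCalculus InnerProductSpace

section Aux

variable {H : Type*} [NormedAddCommGroup H] [InnerProductSpace ℂ H] [CompleteSpace H]

/-- If `b` commutes with a selfadjoint `a`, then `b` commutes with `cfcHom ha g`. -/
theorem commute_cfcHom_real_aux (a b : H →L[ℂ] H) (ha : IsSelfAdjoint a) (hab : a * b = b * a)
    (g : C(spectrum ℝ a, ℝ)) : cfcHom ha g * b = b * cfcHom ha g := by
  have hc : Commute a b := hab
  set K := {g : C(spectrum ℝ a, ℝ) | cfcHom ha g * b = b * cfcHom ha g} with hKdef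
  have hK : IsClosed K :=
    isClosed_eq (((cfcHom_isClosedEmbedding ha).continuous).mul continuous_const)
      (continuous_const.mul (cfcHom_isClosedEmbedding ha).continuous)
  have hpoly : (polynomialFunctions (spectrum ℝ a) : Set C(spectrum ℝ a, ℝ)) ⊆ K := by
    rw [polynomialFunctions_coe]
    rintro - ⟨p, rfl⟩
    have h2 : Commute (Polynomial.aeval a p) b := by
      induction p using Polynomial.induction_on' with
      | add p q hp hq => simpa [map_add] using hp.add_left hq
      | monomial n r =>
        simp only [Polynomial.aeval_monomial]
        exact (Algebra.commute_algebraMap_left r b).mul_left (hc.pow_left n)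
    have h1 : cfcHom ha (Polynomial.toContinuousMapOnAlgHom (spectrum ℝ a) p)
        = cfc (Polynomial.eval · p) a := by
      rw [cfc_apply (Polynomial.eval · p) a ha p.continuous.continuousOn]
      rfl
    have h3 : cfc (Polynomial.eval · p) a = Polynomial.aeval a p := cfc_polynomial p a ha
    show cfcHom ha _ * b = b * cfcHom ha _
    rw [h1, h3]
    exact h2.eq
  have hdense := polynomialFunctions.topologicalClosure (spectrum ℝ a)
  have hg : g ∈ closure (polynomialFunctions (spectrum ℝ a) : Set C(spectrum ℝ a, ℝ)) := by
    rw [← Subalgebra.topologicalClosure_coe, hdense]; trivial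
  exact closure_minimal hpoly hK hg

theorem commute_cfc_real_aux (a b : H →L[ℂ] H) (hab : a * b = b * a) (f : ℝ → ℝ) :
    cfc f a * b = b * cfc f a := by
  refine cfc_cases (fun x => x * b = b * x) a f (by simp) fun hf ha => ?_
  exact commute_cfcHom_real_aux a b ha hab _

/-- If `b` commutes with `0 ≤ a`, then `b` commutes with any real power of `a`. -/
theorem commute_rpow_aux (a b : H →L[ℂ] H) (ha : 0 ≤ a) (hab : a * b = b * a) (y : ℝ) :
    CFC.rpow a y * b = b * CFC.rpow a y := by
  rw [CFC.rpow, cfc_nnreal_eq_real (ha := ha)]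
  exact commute_cfc_real_aux a b hab _

/-- Additivity of real powers with nonnegative exponents (no invertibility needed). -/
theorem rpow_add_nonneg_aux (P : H →L[ℂ] H) (hP : 0 ≤ P) {s r : ℝ} (hs : 0 ≤ s) (hr : 0 ≤ r) :
    CFC.rpow P s * CFC.rpow P r = CFC.rpow P (s + r) := by
  rw [CFC.rpow, CFC.rpow, CFC.rpow, ← cfc_mul _ _ P]
  refine cfc_congr fun x _ => ?_
  rcases eq_or_ne x 0 with rfl | hx
  · rcases eq_or_lt_of_le hs with rfl | hs'
    · simp
    · rcases eq_or_lt_of_le hr with rfl | hr'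
      · simp
      · rw [NNReal.zero_rpow hs'.ne', zero_mul, NNReal.zero_rpow (by positivity)]
  · exact (NNReal.rpow_add hx s r).symm

/-- Positive powers of `P` kill the kernel of `P`. -/
theorem rpow_apply_ker_aux (P : H →L[ℂ] H) (hP : 0 ≤ P) {s : ℝ} (hs : 0 < s) {x : H}
    (hx : P x = 0) : CFC.rpow P s x = 0 := by
  obtain ⟨n, hn⟩ : ∃ n : ℕ, 1 ≤ 2 ^ n * s := by
    obtain ⟨n, hn⟩ := pow_unbounded_of_one_lt (1 / s) (one_lt_two (α := ℝ))
    exact ⟨n, le_of_lt <| (div_lt_iff₀ hs).mp hn⟩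
  induction n generalizing s with
  | zero =>
    simp only [pow_zero, one_mul] at hn
    have h1 : CFC.rpow P (s - 1) * CFC.rpow P 1 = CFC.rpow P s := by
      rw [rpow_add_nonneg_aux P hP (by linarith) zero_le_one, sub_add_cancel]
    have h0 : CFC.rpow P 1 = P := CFC.rpow_one P hP
    rw [← h1, ContinuousLinearMap.mul_apply, h0, hx, map_zero]
  | succ n ih =>
    have h2s : CFC.rpow P (2 * s) x = 0 := by
      refine ih (by positivity) ?_
      rw [pow_succ] at hn
      linarith
    set A := CFC.rpow P s with hA
    have hApos : (0 : H →L[ℂ] H) ≤ A := CFC.rpow_nonneg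
    have hadj : ContinuousLinearMap.adjoint A = A :=
      ContinuousLinearMap.isSelfAdjoint_iff'.mp (IsSelfAdjoint.of_nonneg hApos)
    have hAA : A (A x) = 0 := by
      rw [← ContinuousLinearMap.mul_apply, hA, rpow_add_nonneg_aux P hP hs.le hs.le, ← two_mul,
        h2s]
    have h0 : ⟪A x, A x⟫_ℂ = 0 := by
      nth_rewrite 1 [← hadj]
      rw [ContinuousLinearMap.adjoint_inner_left, hAA, inner_zero_right]
    exact inner_self_eq_zero.mp h0

end Aux

/-- For `0 < t ≤ 1`, the fixed points of the generalized spherical Aluthge transform are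
the spherically quasinormal tuples: if `Δₜ(T) = T` then `P` commutes with each `Vᵢ`,
equivalently with each `Tᵢ`. -/
theorem fixed_points_of_spherical_aluthge
    {H : Type*} [NormedAddCommGroup H] [InnerProductSpace ℂ H] [CompleteSpace H]
    {d : ℕ} (hd : 1 ≤ d) (T V : Fin d → H →L[ℂ] H) (P : H →L[ℂ] H)
    (hcomm : ∀ i j, T i * T j = T j * T i)
    (hPpos : 0 ≤ P)
    (hP2 : P * P = ∑ i, star (T i) * T i)
    (hpolar : ∀ i, T i = V i * P)
    (hproj : ∑ i, star (V i) * V i =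
      ((LinearMap.ker (P : H →ₗ[ℂ] H))ᗮ).subtypeL.comp
        (Submodule.orthogonalProjectionOnto (LinearMap.ker (P : H →ₗ[ℂ] H))ᗮ))
    (t : ℝ) (ht0 : 0 < t) (ht1 : t ≤ 1)
    (hfix : ∀ i, CFC.rpow P t * V i * CFC.rpow P (1 - t) = T i) :
    (∀ i, P * V i = V i * P) ∧ (∀ i, P * T i = T i * P) := by
  set Q := CFC.rpow P t with hQ
  set R := CFC.rpow P (1 - t) with hR
  have hQR : Q * R = P := by
    rw [hQ, hR, rpow_add_nonneg_aux P hPpos ht0.le (by linarith), add_sub_cancel]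
    exact CFC.rpow_one P hPpos
  -- the V i vanish on ker P
  have hVker : ∀ i, ∀ x : H, P x = 0 → V i x = 0 := by
    intro i x hx
    have hxmem : x ∈ ((LinearMap.ker (P : H →ₗ[ℂ] H))ᗮ)ᗮ :=
      Submodule.le_orthogonal_orthogonal _ (LinearMap.mem_ker.mpr hx)
    have hsum : (∑ j, star (V j) * V j) x = 0 := by
      rw [hproj]
      simp [Submodule.orthogonalProjectionOnto_apply_of_mem_orthogonal hxmem]
    have hsum2 : ∑ j, (‖V j x‖ : ℝ) ^ 2 = 0 := by
      have h := congrArg (fun w => ⟪w, x⟫_ℂ) hsum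
      simp only [ContinuousLinearMap.sum_apply, sum_inner, ContinuousLinearMap.mul_apply,
        ContinuousLinearMap.star_eq_adjoint, ContinuousLinearMap.adjoint_inner_left,
        inner_self_eq_norm_sq_to_K, inner_zero_left] at h
      have h' : ((∑ j, ‖V j x‖ ^ 2 : ℝ) : ℂ) = 0 := by push_cast; exact h
      exact_mod_cast h'
    have := (Finset.sum_eq_zero_iff_of_nonneg (fun j _ => sq_nonneg (‖V j x‖))).mp hsum2 i
      (Finset.mem_univ i)
    simpa [pow_eq_zero_iff] using this
  -- Q commutes with each V i
  have hQV : ∀ i, Q * V i = V i * Q := by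
    intro i
    have hfix' : (Q * V i) * R = (V i * Q) * R := by
      rw [mul_assoc (V i) Q R, hQR, hfix i, hpolar i]
    rcases eq_or_lt_of_le ht1 with rfl | htlt
    · have hR1 : R = 1 := by
        rw [hR, sub_self]
        exact CFC.rpow_zero P hPpos
      rw [hR1, mul_one, mul_one] at hfix'
      exact hfix'
    · -- t < 1 : density argument
      set S := Q * V i - V i * Q with hS
      have hSR : ∀ u : H, S (R u) = 0 := by
        intro u
        have : (S * R) u = 0 := by rw [hS, sub_mul, hfix', sub_self]; rfl
        rwa [ContinuousLinearMap.mul_apply] at this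
      have hRadj : ContinuousLinearMap.adjoint R = R :=
        ContinuousLinearMap.isSelfAdjoint_iff'.mp
          (IsSelfAdjoint.of_nonneg (hR ▸ CFC.rpow_nonneg))
      -- S vanishes on ker R
      have hSker : ∀ y ∈ LinearMap.ker (R : H →ₗ[ℂ] H), S y = 0 := by
        intro y hy
        have hyR : R y = 0 := hy
        have hyP : P y = 0 := by
          rw [← hQR, ContinuousLinearMap.mul_apply, hyR, map_zero]
        have hyV : V i y = 0 := hVker i y hyP
        have hyQ : Q y = 0 := rpow_apply_ker_aux P hPpos ht0 hyP
        simp [hS, ContinuousLinearMap.sub_apply, ContinuousLinearMap.mul_apply, hyV, hyQ]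
      -- S vanishes on (ker R)ᗮ
      have hSorth : ∀ z ∈ (LinearMap.ker (R : H →ₗ[ℂ] H))ᗮ, S z = 0 := by
        intro z hz
        have horth : (LinearMap.range (R : H →ₗ[ℂ] H))ᗮ ≤ LinearMap.ker (R : H →ₗ[ℂ] H) := by
          intro y hy
          rw [LinearMap.mem_ker]
          rw [Submodule.mem_orthogonal] at hy
          have h0 : ⟪R y, R y⟫_ℂ = 0 := by
            rw [← ContinuousLinearMap.adjoint_inner_left, hRadj]
            exact hy _ (LinearMap.mem_range_self _ (R y))
          exact inner_self_eq_zero.mp h0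
        have hz' : z ∈ ((LinearMap.range (R : H →ₗ[ℂ] H))ᗮ)ᗮ := Submodule.orthogonal_le horth hz
        rw [Submodule.orthogonal_orthogonal_eq_closure] at hz'
        have hzc : z ∈ closure (LinearMap.range (R : H →ₗ[ℂ] H) : Set H) := hz'
        have hsub : (LinearMap.range (R : H →ₗ[ℂ] H) : Set H) ⊆ {w : H | S w = 0} := by
          rintro - ⟨u, rfl⟩
          exact hSR u
        have hcl : IsClosed {w : H | S w = 0} :=
          isClosed_eq S.continuous continuous_const
        exact closure_minimal hsub hcl hzc
      -- combine
      have hS0 : S = 0 := by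
        ext x
        haveI : CompleteSpace (LinearMap.ker (R : H →ₗ[ℂ] H) : Submodule ℂ H) :=
          (ContinuousLinearMap.isClosed_ker R).completeSpace_coe
        obtain ⟨y, hy, z, hz, rfl⟩ := (LinearMap.ker (R : H →ₗ[ℂ] H)).exists_add_mem_mem_orthogonal x
        simp [map_add, hSker y hy, hSorth z hz]
      have := sub_eq_zero.mp (hS ▸ hS0)
      exact this
  -- conclude : P commutes with each V i
  have hPV : ∀ i, P * V i = V i * P := by
    intro i
    have hQpos : (0 : H →L[ℂ] H) ≤ Q := hQ ▸ CFC.rpow_nonneg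
    have hPQ : CFC.rpow Q (1 / t) = P := by
      have := CFC.rpow_rpow_of_exponent_nonneg P t (1 / t) ht0.le (by positivity) hPpos
      simpa [hQ, mul_one_div, div_self ht0.ne', mul_inv_cancel₀ ht0.ne',
        CFC.rpow_one P hPpos] using this
    rw [← hPQ]
    exact commute_rpow_aux Q (V i) hQpos (hQV i) (1 / t)
  refine ⟨hPV, fun i => ?_⟩
  rw [hpolar i, ← mul_assoc, hPV i]
end

section
/- Let 0 < t < 1. The following statements are equivalent: (i) the tuple T is left invertible; (ii) the positive operator P is invertible; (iii) the tuple Δ_t(T) = (P^t V_1 P^{1−t}, …, P^t V_d P^{1−t}) is left invertible. -/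
open scoped NNReal

/-- A nonnegative (hence selfadjoint) element with a left inverse is a unit. -/
lemma isUnit_of_nonneg_of_left_inv {A : Type*} [Ring A] [StarRing A] [PartialOrder A]
    [StarOrderedRing A] {P B : A} (hP : 0 ≤ P) (h : B * P = 1) : IsUnit P := by
  have hsa : star P = P := (IsSelfAdjoint.of_nonneg hP)
  have h2 : P * star B = 1 := by
    have := congrArg star h
    simpa [star_mul, hsa] using this
  have hB : B = star B := by
    calc B = B * (P * star B) := by rw [h2, mul_one]
    _ = (B * P) * star B := by rw [mul_assoc]
    _ = star B := by rw [h, one_mul]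
  exact ⟨⟨P, B, by rw [hB]; exact h2, h⟩, rfl⟩

/-- For `0 < t < 1`: `T` is left invertible ⟺ `P` is invertible ⟺ `Δₜ(T)` is left
invertible. -/
theorem left_invertibility_of_spherical_aluthge
    {H : Type*} [NormedAddCommGroup H] [InnerProductSpace ℂ H] [CompleteSpace H]
    {d : ℕ} (hd : 1 ≤ d) (T V : Fin d → H →L[ℂ] H) (P : H →L[ℂ] H)
    (hcomm : ∀ i j, T i * T j = T j * T i)
    (hPpos : 0 ≤ P)
    (hP2 : P * P = ∑ i, star (T i) * T i)
    (hpolar : ∀ i, T i = V i * P)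
    (hproj : ∑ i, star (V i) * V i =
      ((LinearMap.ker (P : H →ₗ[ℂ] H))ᗮ).subtypeL.comp
        (Submodule.orthogonalProjectionOnto (LinearMap.ker (P : H →ₗ[ℂ] H))ᗮ))
    (t : ℝ) (ht0 : 0 < t) (ht1 : t < 1) :
    ((∃ A : Fin d → H →L[ℂ] H, ∑ i, A i * T i = 1) ↔ IsUnit P) ∧
    (IsUnit P ↔
      ∃ A : Fin d → H →L[ℂ] H,
        ∑ i, A i * (CFC.rpow P t * V i * CFC.rpow P (1 - t)) = 1) := by
  -- If P is a unit, the projection in hproj is the identity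
  have key : ∀ (hu : IsUnit P), ∑ i, star (V i) * V i = 1 := by
    intro hu
    have hker : LinearMap.ker (P : H →ₗ[ℂ] H) = ⊥ := by
      refine LinearMap.ker_eq_bot.mpr fun x y hxy => ?_
      have h1 : (↑hu.unit⁻¹ * P : H →L[ℂ] H) = 1 := hu.unit.inv_mul
      calc x = (↑hu.unit⁻¹ * P : H →L[ℂ] H) x := by rw [h1]; rfl
        _ = (↑hu.unit⁻¹ * P : H →L[ℂ] H) y := by
            simp only [ContinuousLinearMap.mul_apply]; exact congrArg _ hxy
        _ = y := by rw [h1]; rfl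
    rw [hproj]
    ext x
    have hmem : x ∈ (LinearMap.ker (P : H →ₗ[ℂ] H))ᗮ := by
      rw [hker, Submodule.bot_orthogonal_eq_top]; trivial
    exact Submodule.starProjection_eq_self_iff.mpr hmem
  constructor
  · constructor
    · rintro ⟨A, hA⟩
      refine isUnit_of_nonneg_of_left_inv hPpos (B := ∑ i, A i * V i) ?_
      rw [Finset.sum_mul, ← hA]
      exact Finset.sum_congr rfl fun i _ => by rw [hpolar i, mul_assoc]
    · intro hu
      refine ⟨fun i => ↑hu.unit⁻¹ * star (V i), ?_⟩
      have : ∀ i, (↑hu.unit⁻¹ * star (V i)) * T i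
          = ↑hu.unit⁻¹ * ((star (V i) * V i) * P) := by
        intro i; rw [hpolar i]; simp only [mul_assoc]
      rw [Finset.sum_congr rfl fun i _ => this i, ← Finset.mul_sum, ← Finset.sum_mul,
        key hu]
      simp [← mul_assoc]
  · constructor
    · intro hu
      have h0 : 0 ∉ spectrum ℝ≥0 P := spectrum.zero_notMem ℝ≥0 hu
      refine ⟨fun i => CFC.rpow P (t - 1) * star (V i) * CFC.rpow P (-t), ?_⟩
      have hterm : ∀ i, (CFC.rpow P (t - 1) * star (V i) * CFC.rpow P (-t)) *
          (CFC.rpow P t * V i * CFC.rpow P (1 - t))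
          = CFC.rpow P (t - 1) * ((star (V i) * V i) * CFC.rpow P (1 - t)) := by
        intro i
        have hmul : CFC.rpow P (-t) * CFC.rpow P t = 1 := CFC.rpow_neg_mul_rpow t (hu.isStrictlyPositive hPpos)
        calc (CFC.rpow P (t - 1) * star (V i) * CFC.rpow P (-t)) *
            (CFC.rpow P t * V i * CFC.rpow P (1 - t))
            = CFC.rpow P (t - 1) * star (V i) * (CFC.rpow P (-t) * CFC.rpow P t)
              * V i * CFC.rpow P (1 - t) := by noncomm_ring
          _ = CFC.rpow P (t - 1) * ((star (V i) * V i) * CFC.rpow P (1 - t)) := by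
              rw [hmul]; noncomm_ring
      rw [Finset.sum_congr rfl fun i _ => hterm i, ← Finset.mul_sum, ← Finset.sum_mul,
        key hu]
      rw [one_mul]
      show P ^ (t - 1) * P ^ (1 - t) = 1
      rw [← CFC.rpow_add hu]
      norm_num
      exact CFC.rpow_zero P hPpos
    · rintro ⟨A, hA⟩
      have hQpos : (0 : H →L[ℂ] H) ≤ CFC.rpow P (1 - t) := CFC.rpow_nonneg
      have hQ : IsUnit (CFC.rpow P (1 - t)) := by
        refine isUnit_of_nonneg_of_left_inv hQpos
          (B := ∑ i, A i * (CFC.rpow P t * V i)) ?_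
        rw [Finset.sum_mul, ← hA]
        exact Finset.sum_congr rfl fun i _ => by noncomm_ring
      have h0Q : 0 ∉ spectrum ℝ≥0 (CFC.rpow P (1 - t)) := spectrum.zero_notMem ℝ≥0 hQ
      have h1t : (0:ℝ) ≤ 1 - t := by linarith
      have hPeq : CFC.rpow (CFC.rpow P (1 - t)) (1 - t)⁻¹ = P := by
        show (P ^ (1 - t) : H →L[ℂ] H) ^ ((1 - t)⁻¹ : ℝ) = P
        rw [CFC.rpow_rpow_of_exponent_nonneg P (1 - t) (1 - t)⁻¹ h1t
          (by positivity) hPpos]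
        rw [mul_inv_cancel₀ (by linarith : (1:ℝ) - t ≠ 0)]
        exact CFC.rpow_one P hPpos
      rw [← hPeq]
      exact ⟨⟨_, CFC.rpow (CFC.rpow P (1 - t)) (-(1 - t)⁻¹),
        CFC.rpow_mul_rpow_neg _ (hQ.isStrictlyPositive hQpos), CFC.rpow_neg_mul_rpow _ (hQ.isStrictlyPositive hQpos)⟩, rfl⟩
end

section
/- Let 0 < t ≤ 1. If the tuple Δ_t(T) = (P^t V_1 P^{1−t}, …, P^t V_d P^{1−t}) is right invertible, then the positive operator P is invertible, and moreover the tuple T is right invertible. -/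
/-- For `0 < t ≤ 1`: if `Δₜ(T)` is right invertible, then `P` is invertible and `T` is
right invertible. -/
theorem right_invertibility_of_spherical_aluthge
    {H : Type*} [NormedAddCommGroup H] [InnerProductSpace ℂ H] [CompleteSpace H]
    {d : ℕ} (hd : 1 ≤ d) (T V : Fin d → H →L[ℂ] H) (P : H →L[ℂ] H)
    (hcomm : ∀ i j, T i * T j = T j * T i)
    (hPpos : 0 ≤ P)
    (hP2 : P * P = ∑ i, star (T i) * T i)
    (hpolar : ∀ i, T i = V i * P)
    (hproj : ∑ i, star (V i) * V i =
      ((LinearMap.ker (P : H →ₗ[ℂ] H))ᗮ).subtypeL.comp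
        (Submodule.orthogonalProjectionOnto (LinearMap.ker (P : H →ₗ[ℂ] H))ᗮ))
    (t : ℝ) (ht0 : 0 < t) (ht1 : t ≤ 1)
    (hright : ∃ B : Fin d → H →L[ℂ] H,
      ∑ i, (CFC.rpow P t * V i * CFC.rpow P (1 - t)) * B i = 1) :
    IsUnit P ∧ ∃ B : Fin d → H →L[ℂ] H, ∑ i, T i * B i = 1 := by
  obtain ⟨B₀, hB₀⟩ := hright
  set X : H →L[ℂ] H := ∑ i, V i * (CFC.rpow P (1 - t) * B₀ i) with hX
  have h1 : CFC.rpow P t * X = 1 := by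
    rw [hX, Finset.mul_sum, ← hB₀]
    try exact Finset.sum_congr rfl fun i _ => by noncomm_ring
  -- P^t is selfadjoint, so X * P^t = 1 as well
  have hPt_nonneg : (0 : H →L[ℂ] H) ≤ CFC.rpow P t := CFC.rpow_nonneg
  have hPt_sa : IsSelfAdjoint (CFC.rpow P t) := IsSelfAdjoint.of_nonneg hPt_nonneg
  have h2 : X * CFC.rpow P t = 1 := by
    have hstar : star X * CFC.rpow P t = 1 := by
      have h := congrArg star h1
      rwa [star_mul, star_one, hPt_sa.star_eq] at h
    have hXX : star X = X := by
      calc star X = star X * (CFC.rpow P t * X) := by rw [h1, mul_one]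
        _ = (star X * CFC.rpow P t) * X := by rw [mul_assoc]
        _ = X := by rw [hstar, one_mul]
    rwa [hXX] at hstar
  have hunitPt : IsUnit (CFC.rpow P t) := ⟨⟨CFC.rpow P t, X, h1, h2⟩, rfl⟩
  have hspec : (0 : NNReal) ∉ spectrum NNReal (CFC.rpow P t) :=
    spectrum.zero_notMem NNReal hunitPt
  have hPP : CFC.rpow (CFC.rpow P t) (1 / t) = P := by
    simp only [CFC.rpow_eq_pow]
    rw [CFC.rpow_rpow_of_exponent_nonneg P t (1 / t) ht0.le (by positivity) hPpos,
      mul_one_div, div_self ht0.ne', CFC.rpow_one P hPpos]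
  have hunitP : IsUnit P := by
    rw [← hPP]
    have hmul1 := CFC.rpow_mul_rpow_neg (a := CFC.rpow P t) (1 / t) (IsStrictlyPositive.iff_of_unital.mpr ⟨hPt_nonneg, hunitPt⟩)
    have hmul2 := CFC.rpow_neg_mul_rpow (a := CFC.rpow P t) (1 / t) (IsStrictlyPositive.iff_of_unital.mpr ⟨hPt_nonneg, hunitPt⟩)
    simp only [← CFC.rpow_eq_pow] at hmul1 hmul2
    exact ⟨⟨_, _, hmul1, hmul2⟩, rfl⟩
  refine ⟨hunitP, ?_⟩
  obtain ⟨u, hu⟩ := hunitP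
  refine ⟨fun i => ↑u⁻¹ * (CFC.rpow P (1 - t) * B₀ i * CFC.rpow P t), ?_⟩
  have key : ∀ i, T i * (↑u⁻¹ * (CFC.rpow P (1 - t) * B₀ i * CFC.rpow P t))
      = V i * (CFC.rpow P (1 - t) * B₀ i) * CFC.rpow P t := by
    intro i
    have hPu : P * ↑u⁻¹ = 1 := by rw [← hu]; exact u.mul_inv
    rw [hpolar i]
    calc V i * P * (↑u⁻¹ * (CFC.rpow P (1 - t) * B₀ i * CFC.rpow P t))
        = V i * (P * ↑u⁻¹) * (CFC.rpow P (1 - t) * B₀ i * CFC.rpow P t) := by noncomm_ring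
      _ = V i * (CFC.rpow P (1 - t) * B₀ i) * CFC.rpow P t := by rw [hPu]; noncomm_ring
  calc ∑ i, T i * (↑u⁻¹ * (CFC.rpow P (1 - t) * B₀ i * CFC.rpow P t))
      = ∑ i, V i * (CFC.rpow P (1 - t) * B₀ i) * CFC.rpow P t := by
        exact Finset.sum_congr rfl fun i _ => key i
    _ = X * CFC.rpow P t := by rw [hX, Finset.sum_mul]
    _ = 1 := h2
end

section
/- Let 0 < t ≤ 1. The tuple T is Harte invertible (both left and right invertible) if and only if the tuple Δ_t(T) = (P^t V_1 P^{1−t}, …, P^t V_d P^{1−t}) is Harte invertible. -/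
open scoped NNReal

private lemma myIsUnit_left {R : Type*} [Monoid R] {x y z : R}
    (hyx : y * x = 1) (hxz : x * z = 1) : IsUnit x := by
  have hzy : z = y := by
    calc z = 1 * z := (one_mul z).symm
    _ = y * x * z := by rw [hyx]
    _ = y * (x * z) := by rw [mul_assoc]
    _ = y := by rw [hxz, mul_one]
  exact ⟨⟨x, z, hxz, hzy ▸ hyx⟩, rfl⟩

private lemma myIsUnit_of_sa_left {R : Type*} [Monoid R] [StarMul R] {x y : R}
    (hx : star x = x) (h : y * x = 1) : IsUnit x := by
  have h2 : x * star y = 1 := by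
    have := congrArg star h
    rwa [star_mul, hx, star_one] at this
  exact myIsUnit_left h h2

private lemma myIsUnit_of_sa_right {R : Type*} [Monoid R] [StarMul R] {x y : R}
    (hx : star x = x) (h : x * y = 1) : IsUnit x := by
  have h2 : star y * x = 1 := by
    have := congrArg star h
    rwa [star_mul, hx, star_one] at this
  exact myIsUnit_left h2 h

private lemma conj_mul_conj {R : Type*} [Ring R] (u v a b : R) (h : v * u = 1) :
    (u * a * v) * (u * b * v) = u * (a * b) * v := by
  have h1 : u * (a * b) * v = u * (a * ((v * u) * (b * v))) := by
    rw [h, one_mul]; simp only [mul_assoc]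
  rw [h1]; simp only [mul_assoc]

private lemma sandwich {R : Type*} [Ring R] (u v b : R) (h : v * u = 1) :
    v * (u * b * v) * u = b := by
  have h1 : v * (u * b * v) * u = (v * u) * b * (v * u) := by simp only [mul_assoc]
  rw [h1, h, one_mul, mul_one]

set_option maxHeartbeats 2000000 in
/-- For `0 < t ≤ 1`: `T` is Harte invertible iff `Δₜ(T)` is Harte invertible. -/
theorem harte_invertibility_of_spherical_aluthge
    {H : Type*} [NormedAddCommGroup H] [InnerProductSpace ℂ H] [CompleteSpace H]
    {d : ℕ} (hd : 1 ≤ d) (T V : Fin d → H →L[ℂ] H) (P : H →L[ℂ] H)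
    (hcomm : ∀ i j, T i * T j = T j * T i)
    (hPpos : 0 ≤ P)
    (hP2 : P * P = ∑ i, star (T i) * T i)
    (hpolar : ∀ i, T i = V i * P)
    (hproj : ∑ i, star (V i) * V i =
      ((LinearMap.ker (P : H →ₗ[ℂ] H))ᗮ).subtypeL.comp
        (Submodule.orthogonalProjectionOnto (LinearMap.ker (P : H →ₗ[ℂ] H))ᗮ))
    (t : ℝ) (ht0 : 0 < t) (ht1 : t ≤ 1) :
    ((∃ A : Fin d → H →L[ℂ] H, ∑ i, A i * T i = 1) ∧
      (∃ B : Fin d → H →L[ℂ] H, ∑ i, T i * B i = 1)) ↔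
    ((∃ A : Fin d → H →L[ℂ] H,
        ∑ i, A i * (CFC.rpow P t * V i * CFC.rpow P (1 - t)) = 1) ∧
      (∃ B : Fin d → H →L[ℂ] H,
        ∑ i, (CFC.rpow P t * V i * CFC.rpow P (1 - t)) * B i = 1)) := by
  simp only [CFC.rpow_eq_pow]
  have hPsa : IsSelfAdjoint P := IsSelfAdjoint.of_nonneg hPpos
  -- the main equivalence, assuming `P` is invertible
  have main : (0 : ℝ≥0) ∉ spectrum ℝ≥0 P →
      (((∃ A : Fin d → H →L[ℂ] H, ∑ i, A i * T i = 1) ∧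
        (∃ B : Fin d → H →L[ℂ] H, ∑ i, T i * B i = 1)) ↔
      ((∃ A : Fin d → H →L[ℂ] H,
          ∑ i, A i * (P ^ t * V i * P ^ (1 - t)) = 1) ∧
        (∃ B : Fin d → H →L[ℂ] H,
          ∑ i, (P ^ t * V i * P ^ (1 - t)) * B i = 1))) := by
    intro h0
    have huv : P ^ t * P ^ (-t) = 1 := CFC.rpow_mul_rpow_neg t (((spectrum.zero_notMem_iff ℝ≥0).mp h0).isStrictlyPositive hPpos)
    have hvu : P ^ (-t) * P ^ t = 1 := CFC.rpow_neg_mul_rpow t (((spectrum.zero_notMem_iff ℝ≥0).mp h0).isStrictlyPositive hPpos)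
    have hkey : ∀ i, P ^ t * V i * P ^ (1 - t) = P ^ t * T i * P ^ (-t) := by
      intro i
      have h1 : P ^ ((1:ℝ) - t) = P * P ^ (-t) := by
        rw [sub_eq_add_neg, CFC.rpow_add ((spectrum.zero_notMem_iff ℝ≥0).mp h0), CFC.rpow_one P hPpos]
      rw [h1, hpolar i]
      simp only [mul_assoc]
    constructor
    · rintro ⟨⟨A, hA⟩, ⟨B, hB⟩⟩
      refine ⟨⟨fun i => P ^ t * A i * P ^ (-t), ?_⟩, ⟨fun i => P ^ t * B i * P ^ (-t), ?_⟩⟩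
      · have : ∀ i ∈ Finset.univ, (P ^ t * A i * P ^ (-t)) * (P ^ t * V i * P ^ (1 - t))
            = P ^ t * (A i * T i) * P ^ (-t) := by
          intro i _
          rw [hkey i, conj_mul_conj _ _ _ _ hvu]
        rw [Finset.sum_congr rfl this, ← Finset.sum_mul, ← Finset.mul_sum, hA, mul_one, huv]
      · have : ∀ i ∈ Finset.univ, (P ^ t * V i * P ^ (1 - t)) * (P ^ t * B i * P ^ (-t))
            = P ^ t * (T i * B i) * P ^ (-t) := by
          intro i _
          rw [hkey i, conj_mul_conj _ _ _ _ hvu]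
        rw [Finset.sum_congr rfl this, ← Finset.sum_mul, ← Finset.mul_sum, hB, mul_one, huv]
    · rintro ⟨⟨A, hA⟩, ⟨B, hB⟩⟩
      refine ⟨⟨fun i => P ^ (-t) * A i * P ^ t, ?_⟩, ⟨fun i => P ^ (-t) * B i * P ^ t, ?_⟩⟩
      · have : ∀ i ∈ Finset.univ, (P ^ (-t) * A i * P ^ t) * T i
            = P ^ (-t) * (A i * (P ^ t * V i * P ^ (1 - t))) * P ^ t := by
          intro i _
          rw [hkey i,
            show T i = P ^ (-t) * (P ^ t * T i * P ^ (-t)) * P ^ t from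
              (sandwich _ _ (T i) hvu).symm,
            conj_mul_conj _ _ _ _ huv, sandwich _ _ (T i) hvu]
        rw [Finset.sum_congr rfl this, ← Finset.sum_mul, ← Finset.mul_sum, hA, mul_one, hvu]
      · have : ∀ i ∈ Finset.univ, T i * (P ^ (-t) * B i * P ^ t)
            = P ^ (-t) * ((P ^ t * V i * P ^ (1 - t)) * B i) * P ^ t := by
          intro i _
          rw [hkey i,
            show T i = P ^ (-t) * (P ^ t * T i * P ^ (-t)) * P ^ t from
              (sandwich _ _ (T i) hvu).symm,
            conj_mul_conj _ _ _ _ huv, sandwich _ _ (T i) hvu]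
        rw [Finset.sum_congr rfl this, ← Finset.sum_mul, ← Finset.mul_sum, hB, mul_one, hvu]
  constructor
  · rintro ⟨⟨A, hA⟩, hR⟩
    -- left invertibility of T gives invertibility of P
    have hWP : (∑ i, A i * V i) * P = 1 := by
      rw [Finset.sum_mul]
      calc ∑ i, A i * V i * P = ∑ i, A i * T i := by
            refine Finset.sum_congr rfl fun i _ => ?_
            rw [hpolar i, mul_assoc]
        _ = 1 := hA
    have hPunit : IsUnit P := myIsUnit_of_sa_left hPsa.star_eq hWP
    have h0 : (0 : ℝ≥0) ∉ spectrum ℝ≥0 P := spectrum.zero_notMem ℝ≥0 hPunit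
    exact (main h0).mp ⟨⟨A, hA⟩, hR⟩
  · rintro ⟨hL, ⟨B, hB⟩⟩
    -- right invertibility of Δₜ(T) gives invertibility of P^t, hence of P
    have htpos : (0:ℝ) ≤ t := le_of_lt ht0
    have hPt : P ^ t * (∑ i, V i * (P ^ (1 - t) * B i)) = 1 := by
      rw [Finset.mul_sum]
      calc ∑ i, P ^ t * (V i * (P ^ (1 - t) * B i))
          = ∑ i, (P ^ t * V i * P ^ (1 - t)) * B i := by
            refine Finset.sum_congr rfl fun i _ => ?_
            simp only [mul_assoc]
        _ = 1 := hB
    have hPtnn : (0 : H →L[ℂ] H) ≤ P ^ t := CFC.rpow_nonneg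
    have hPtsa : IsSelfAdjoint (P ^ t) := IsSelfAdjoint.of_nonneg hPtnn
    have hPtunit : IsUnit (P ^ t) := myIsUnit_of_sa_right hPtsa.star_eq hPt
    have h0t : (0 : ℝ≥0) ∉ spectrum ℝ≥0 (P ^ t) :=
      spectrum.zero_notMem ℝ≥0 hPtunit
    have hre : (P ^ t) ^ (t⁻¹ : ℝ) = P := by
      rw [CFC.rpow_rpow_of_exponent_nonneg P t t⁻¹ htpos (by positivity) hPpos,
        mul_inv_cancel₀ (ne_of_gt ht0), CFC.rpow_one P hPpos]
    have hPunit : IsUnit P := by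
      have h1 := CFC.rpow_mul_rpow_neg t⁻¹ (((spectrum.zero_notMem_iff ℝ≥0).mp h0t).isStrictlyPositive hPtnn)
      have h2 := CFC.rpow_neg_mul_rpow t⁻¹ (((spectrum.zero_notMem_iff ℝ≥0).mp h0t).isStrictlyPositive hPtnn)
      rw [hre] at h1 h2
      exact myIsUnit_left h2 h1
    have h0 : (0 : ℝ≥0) ∉ spectrum ℝ≥0 P := spectrum.zero_notMem ℝ≥0 hPunit
    exact (main h0).mpr ⟨hL, ⟨B, hB⟩⟩
end

section
/- Let 0 < t ≤ 1. If the tuple Δ_t(T) = (P^t V_1 P^{1−t}, …, P^t V_d P^{1−t}) is right Fredholm, then the positive operator P is invertible modulo compact operators, and moreover the tuple T is right Fredholm. -/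
set_option maxHeartbeats 1000000
set_option synthInstance.maxHeartbeats 1000000

open scoped NNReal

section Aux

variable {H : Type*} [NormedAddCommGroup H] [InnerProductSpace ℂ H] [CompleteSpace H]

/-- Schauder's theorem in Hilbert space: the adjoint of a compact operator is compact. -/
lemma aux_schauder {K : H →L[ℂ] H} (hK : IsCompactOperator ⇑K) :
    IsCompactOperator ⇑(ContinuousLinearMap.adjoint K) := by
  set A := ContinuousLinearMap.adjoint K with hA
  set L := K.comp A with hLdef
  have hL : IsCompactOperator ⇑L := hK.comp_clm A
  have hL' : IsCompactOperator ⇑(L : H →ₗ[ℂ] H) := by rwa [ContinuousLinearMap.coe_coe]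
  have htbL : TotallyBounded (⇑L '' Metric.closedBall 0 1) := by
    have := (hL'.isCompact_closure_image_closedBall 1).totallyBounded
    rw [ContinuousLinearMap.coe_coe] at this
    exact this.subset subset_closure
  have key : ∀ u : H, ‖A u‖ ^ 2 ≤ ‖u‖ * ‖L u‖ := by
    intro u
    have h1 : (‖A u‖ : ℝ) ^ 2 = RCLike.re (inner ℂ (A u) (A u) : ℂ) := by
      rw [inner_self_eq_norm_sq]
    have h2 : (inner ℂ (A u) (A u) : ℂ) = inner ℂ u (L u) := by
      rw [hA, ContinuousLinearMap.adjoint_inner_left]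
      rfl
    rw [h1, h2]
    calc RCLike.re (inner ℂ u (L u) : ℂ) ≤ ‖(inner ℂ u (L u) : ℂ)‖ := RCLike.re_le_norm _
      _ ≤ ‖u‖ * ‖L u‖ := norm_inner_le_norm _ _
  have htb : TotallyBounded (⇑A '' Metric.closedBall 0 1) := by
    refine Metric.totallyBounded_iff.2 fun ε hε => ?_
    have hδ : (0:ℝ) < ε ^ 2 / 3 := by positivity
    obtain ⟨t, htsub, htfin, htcover⟩ :=
      totallyBounded_iff_subset.1 htbL _ (Metric.dist_mem_uniformity hδ)
    classical
    set g : H → H := fun c =>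
      if h : ∃ x' ∈ Metric.closedBall (0:H) 1, L x' = c then A h.choose else 0 with hg
    refine ⟨g '' t, htfin.image g, ?_⟩
    rintro - ⟨x, hx, rfl⟩
    have hcov := htcover (Set.mem_image_of_mem _ hx)
    rw [Set.mem_iUnion₂] at hcov
    obtain ⟨c, hct, hdist⟩ := hcov
    have hce : ∃ x' ∈ Metric.closedBall (0:H) 1, L x' = c := by
      obtain ⟨x', hx', rfl⟩ := htsub hct
      exact ⟨x', hx', rfl⟩
    rw [Set.mem_iUnion₂]
    refine ⟨g c, Set.mem_image_of_mem _ hct, ?_⟩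
    have hgc : g c = A hce.choose := dif_pos hce
    obtain ⟨hx'ball, hLx'⟩ := hce.choose_spec
    set x' := hce.choose
    have hnorm2 : ‖x - x'‖ ≤ 2 := by
      have h1 : ‖x‖ ≤ 1 := mem_closedBall_zero_iff.1 hx
      have h2 : ‖x'‖ ≤ 1 := mem_closedBall_zero_iff.1 hx'ball
      calc ‖x - x'‖ ≤ ‖x‖ + ‖x'‖ := norm_sub_le _ _
        _ ≤ 2 := by linarith
    have hdist' : dist (L x) c < ε ^ 2 / 3 := hdist
    have hLnorm : ‖L (x - x')‖ < ε ^ 2 / 3 := by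
      rw [map_sub, ← dist_eq_norm, hLx']
      exact hdist'
    have hkey := key (x - x')
    have hlt : ‖A (x - x')‖ ^ 2 < ε ^ 2 := by
      have : ‖x - x'‖ * ‖L (x - x')‖ ≤ 2 * (ε^2/3) := by
        apply mul_le_mul hnorm2 hLnorm.le (norm_nonneg _) (by norm_num)
      nlinarith [norm_nonneg (A (x - x'))]
    have : ‖A (x - x')‖ < ε := lt_of_pow_lt_pow_left₀ 2 hε.le hlt
    rw [Metric.mem_ball, hgc, dist_eq_norm, ← map_sub]
    exact this
  rw [isCompactOperator_iff_exists_mem_nhds_image_subset_compact]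
  exact ⟨Metric.closedBall 0 1, Metric.closedBall_mem_nhds 0 one_pos,
    closure (⇑A '' Metric.closedBall 0 1),
    TotallyBounded.isCompact_of_isClosed htb.closure isClosed_closure, subset_closure⟩

lemma aux_cpt_mul_left (X : H →L[ℂ] H) {Y : H →L[ℂ] H} (h : IsCompactOperator ⇑Y) :
    IsCompactOperator ⇑(X * Y) :=
  h.continuous_comp X.continuous

lemma aux_cpt_mul_right {X : H →L[ℂ] H} (h : IsCompactOperator ⇑X) (Y : H →L[ℂ] H) :
    IsCompactOperator ⇑(X * Y) :=
  h.comp_clm Y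

lemma aux_cpt_add {X Y : H →L[ℂ] H} (hX : IsCompactOperator ⇑X) (hY : IsCompactOperator ⇑Y) :
    IsCompactOperator ⇑(X + Y) := by
  exact ContinuousLinearMap.coe_add' X Y ▸ hX.add hY

lemma aux_cpt_sub {X Y : H →L[ℂ] H} (hX : IsCompactOperator ⇑X) (hY : IsCompactOperator ⇑Y) :
    IsCompactOperator ⇑(X - Y) := by
  exact ContinuousLinearMap.coe_sub' X Y ▸ hX.sub hY

lemma aux_cpt_zero : IsCompactOperator ⇑(0 : H →L[ℂ] H) := by
  have h : ⇑(0 : H →L[ℂ] H) = (0 : H → H) := rfl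
  rw [h]; exact isCompactOperator_zero

lemma aux_cpt_sum {ι : Type*} (s : Finset ι) (f : ι → H →L[ℂ] H)
    (h : ∀ i ∈ s, IsCompactOperator ⇑(f i)) : IsCompactOperator ⇑(∑ i ∈ s, f i) :=
  Finset.sum_induction f (fun X => IsCompactOperator ⇑X)
    (fun _ _ ha hb => aux_cpt_add ha hb) aux_cpt_zero h

lemma aux_cpt_star {X : H →L[ℂ] H} (h : IsCompactOperator ⇑X) :
    IsCompactOperator ⇑(star X) := by
  rw [ContinuousLinearMap.star_eq_adjoint]
  exact aux_schauder h

/-- "Essentially equal to 1" : `X - 1` is compact. -/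
def Ecpt (X : H →L[ℂ] H) : Prop := IsCompactOperator ⇑(X - 1)

lemma ecpt_of_eq {X K : H →L[ℂ] H} (hK : IsCompactOperator ⇑K) (h : X = 1 + K) : Ecpt X := by
  have : X - 1 = K := by rw [h]; abel
  rw [Ecpt, this]; exact hK

lemma Ecpt.exists_eq {X : H →L[ℂ] H} (h : Ecpt X) :
    ∃ K : H →L[ℂ] H, IsCompactOperator ⇑K ∧ X = 1 + K :=
  ⟨X - 1, h, by abel⟩

lemma ecpt_one : Ecpt (1 : H →L[ℂ] H) := by
  rw [Ecpt, sub_self]; exact aux_cpt_zero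

lemma ecpt_congr {X Y : H →L[ℂ] H} (h : IsCompactOperator ⇑(X - Y)) (hY : Ecpt Y) : Ecpt X := by
  have : X - 1 = (X - Y) + (Y - 1) := by abel
  rw [Ecpt, this]; exact aux_cpt_add h hY

lemma ecpt_sandwich {X Y Z : H →L[ℂ] H} (hY : Ecpt Y) (hXZ : Ecpt (X * Z)) : Ecpt (X * Y * Z) := by
  refine ecpt_congr ?_ hXZ
  have : X * Y * Z - X * Z = X * ((Y - 1) * Z) := by noncomm_ring
  rw [this]
  exact aux_cpt_mul_left X (aux_cpt_mul_right hY Z)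

lemma ecpt_mulcomm {a b c : H →L[ℂ] H} (hab : Ecpt (a * b)) (hca : Ecpt (c * a)) :
    Ecpt (b * a) := by
  have heq : b * a - 1 = (c * a - 1) + (c * ((a * b) - 1) * a - (c * a - 1) * (b * a)) := by
    noncomm_ring
  rw [Ecpt, heq]
  exact aux_cpt_add hca (aux_cpt_sub
    (aux_cpt_mul_right (aux_cpt_mul_left c hab) a)
    (aux_cpt_mul_right hca (b * a)))

lemma ecpt_star {X : H →L[ℂ] H} (h : Ecpt X) : Ecpt (star X) := by
  have : star X - 1 = star (X - 1) := by rw [star_sub, star_one]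
  rw [Ecpt, this]
  exact aux_cpt_star h

lemma aux_crpow_add (P : H →L[ℂ] H) {x y : ℝ} (hx : 0 < x) (hy : 0 < y) :
    CFC.rpow P x * CFC.rpow P y = CFC.rpow P (x + y) := by
  have hx' : (0:ℝ≥0) < x.toNNReal := by simpa using hx
  have hy' : (0:ℝ≥0) < y.toNNReal := by simpa using hy
  rw [CFC.rpow_eq_pow, CFC.rpow_eq_pow, CFC.rpow_eq_pow,
    ← Real.coe_toNNReal x hx.le, ← Real.coe_toNNReal y hy.le, ← NNReal.coe_add,
    ← CFC.nnrpow_eq_rpow hx', ← CFC.nnrpow_eq_rpow hy',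
    ← CFC.nnrpow_eq_rpow (add_pos hx' hy')]
  exact (CFC.nnrpow_add hx' hy').symm

end Aux

/-- For `0 < t ≤ 1`: if `Δₜ(T)` is right Fredholm, then `P` is invertible modulo compact
operators and `T` is right Fredholm. -/
theorem right_fredholmness_of_spherical_aluthge
    {H : Type*} [NormedAddCommGroup H] [InnerProductSpace ℂ H] [CompleteSpace H]
    {d : ℕ} (hd : 1 ≤ d) (T V : Fin d → H →L[ℂ] H) (P : H →L[ℂ] H)
    (hcomm : ∀ i j, T i * T j = T j * T i)
    (hPpos : 0 ≤ P)
    (hP2 : P * P = ∑ i, star (T i) * T i)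
    (hpolar : ∀ i, T i = V i * P)
    (hproj : ∑ i, star (V i) * V i =
      ((LinearMap.ker (P : H →ₗ[ℂ] H))ᗮ).subtypeL.comp
        (Submodule.orthogonalProjectionOnto (LinearMap.ker (P : H →ₗ[ℂ] H))ᗮ))
    (t : ℝ) (ht0 : 0 < t) (ht1 : t ≤ 1)
    (hright : ∃ B : Fin d → H →L[ℂ] H, ∃ K : H →L[ℂ] H, IsCompactOperator ⇑K ∧
      ∑ i, (CFC.rpow P t * V i * CFC.rpow P (1 - t)) * B i = 1 + K) :
    (∃ S K K' : H →L[ℂ] H, IsCompactOperator ⇑K ∧ IsCompactOperator ⇑K' ∧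
      S * P = 1 + K ∧ P * S = 1 + K') ∧
    (∃ B : Fin d → H →L[ℂ] H, ∃ K : H →L[ℂ] H, IsCompactOperator ⇑K ∧
      ∑ i, T i * B i = 1 + K) := by
  classical
  obtain ⟨B, K0, hK0, hsum⟩ := hright
  set A := CFC.rpow P t with hAdef
  set P1t := CFC.rpow P (1 - t) with hP1tdef
  set D : H →L[ℂ] H := ∑ i, V i * P1t * B i with hDdef
  -- A * D is essentially 1
  have hAD : Ecpt (A * D) := by
    refine ecpt_of_eq hK0 ?_
    rw [← hsum, hDdef, Finset.mul_sum]
    exact Finset.sum_congr rfl fun i _ => by noncomm_ring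
  -- selfadjointness of powers of P
  have hsa : ∀ x : ℝ, star (CFC.rpow P x) = CFC.rpow P x :=
    fun x => IsSelfAdjoint.of_nonneg CFC.rpow_nonneg
  -- star D * A is essentially 1
  have hDsA : Ecpt (star D * A) := by
    have := ecpt_star hAD
    rwa [star_mul, hAdef, hsa t, ← hAdef] at this
  -- choice of n
  set n : ℕ := ⌈1 / t⌉₊ + 1 with hn
  have hnt : 1 < (n : ℝ) * t := by
    have h1 : (1:ℝ) / t ≤ (⌈1 / t⌉₊ : ℝ) := Nat.le_ceil _
    have h2 : ((n:ℕ) : ℝ) = (⌈1 / t⌉₊ : ℝ) + 1 := by push_cast [hn]; ring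
    have h3 : (1/t) * t = 1 := by field_simp
    nlinarith
  set s : ℝ := (n : ℝ) * t - 1 with hsdef
  have hs : 0 < s := by simp only [hsdef]; linarith
  -- powers of A are rpowers of P
  have hpow : ∀ m : ℕ, 1 ≤ m → A ^ m = CFC.rpow P ((m : ℝ) * t) := by
    intro m hm
    induction m with
    | zero => omega
    | succ k ih =>
      rcases Nat.eq_or_lt_of_le hm with h1 | h1
      · rw [← h1]
        simp only [pow_one, Nat.cast_one, one_mul, hAdef]
      · have hk : 1 ≤ k := by omega
        rw [pow_succ, ih hk, hAdef, aux_crpow_add P (by positivity) ht0]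
        congr 1
        push_cast
        ring
  have hAn : A ^ n = CFC.rpow P ((n : ℝ) * t) := hpow n (by omega)
  -- P * P^s = A^n and P^s * P = A^n
  have hPs1 : P * CFC.rpow P s = A ^ n := by
    have h0 : CFC.rpow P 1 = P := by rw [CFC.rpow_eq_pow]; exact CFC.rpow_one P hPpos
    have h1 : P * CFC.rpow P s = CFC.rpow P 1 * CFC.rpow P s := by rw [h0]
    rw [h1, aux_crpow_add P one_pos hs, hAn]
    congr 1
    simp only [hsdef]; ring
  have hPs2 : CFC.rpow P s * P = A ^ n := by
    have h0 : CFC.rpow P 1 = P := by rw [CFC.rpow_eq_pow]; exact CFC.rpow_one P hPpos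
    have h1 : CFC.rpow P s * P = CFC.rpow P s * CFC.rpow P 1 := by rw [h0]
    rw [h1, aux_crpow_add P hs one_pos, hAn]
    congr 1
    simp only [hsdef]; ring
  -- iterated essential invertibility
  have hAnDn : ∀ m : ℕ, Ecpt (A ^ m * D ^ m) := by
    intro m
    induction m with
    | zero => simpa using ecpt_one
    | succ k ih =>
      have heq : A ^ (k+1) * D ^ (k+1) = A ^ k * (A * D) * D ^ k := by
        rw [pow_succ, pow_succ']; noncomm_ring
      rw [heq]
      exact ecpt_sandwich hAD ih
  have hDsAn : ∀ m : ℕ, Ecpt ((star D) ^ m * A ^ m) := by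
    intro m
    induction m with
    | zero => simpa using ecpt_one
    | succ k ih =>
      have heq : (star D) ^ (k+1) * A ^ (k+1) = (star D) ^ k * (star D * A) * A ^ k := by
        rw [pow_succ, pow_succ']; noncomm_ring
      rw [heq]
      exact ecpt_sandwich hDsA ih
  -- the essential inverse of P
  set S : H →L[ℂ] H := CFC.rpow P s * D ^ n with hSdef
  set S1 : H →L[ℂ] H := (star D) ^ n * CFC.rpow P s with hS1def
  have hPS : Ecpt (P * S) := by
    have : P * S = A ^ n * D ^ n := by rw [hSdef, ← mul_assoc, hPs1]
    rw [this]; exact hAnDn n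
  have hS1P : Ecpt (S1 * P) := by
    have : S1 * P = (star D) ^ n * A ^ n := by rw [hS1def, mul_assoc, hPs2]
    rw [this]; exact hDsAn n
  have hSP : Ecpt (S * P) := ecpt_mulcomm hPS hS1P
  constructor
  · obtain ⟨K1, hK1, he1⟩ := hSP.exists_eq
    obtain ⟨K2, hK2, he2⟩ := hPS.exists_eq
    exact ⟨S, K1, K2, hK1, hK2, he1, he2⟩
  · -- right Fredholmness of T
    have hDA : Ecpt (D * A) := ecpt_mulcomm hAD hDsA
    set Bf : Fin d → H →L[ℂ] H := fun i => S * (P1t * B i * A) with hBf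
    have hXsum : ∑ i, V i * (P1t * B i * A) = D * A := by
      rw [hDdef, Finset.sum_mul]
      exact Finset.sum_congr rfl fun i _ => by noncomm_ring
    have hdiff : IsCompactOperator ⇑((∑ i, T i * Bf i) - D * A) := by
      have heq : (∑ i, T i * Bf i) - D * A
          = ∑ i, V i * ((P * S - 1) * (P1t * B i * A)) := by
        rw [← hXsum, ← Finset.sum_sub_distrib]
        refine Finset.sum_congr rfl fun i _ => by
          rw [hpolar i, hBf]; noncomm_ring
      rw [heq]
      exact aux_cpt_sum _ _ fun i _ =>
        aux_cpt_mul_left (V i) (aux_cpt_mul_right hPS (P1t * B i * A))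
    have : Ecpt (∑ i, T i * Bf i) := ecpt_congr hdiff hDA
    obtain ⟨K, hK, he⟩ := this.exists_eq
    exact ⟨Bf, K, hK, he⟩
end

section
/- Let 0 ≤ t < 1. The left (Harte) spectra of T and Δ_t(T) coincide: for every λ = (λ_1, …, λ_d) ∈ ℂ^d, the tuple T − λ = (T_1 − λ_1 I, …, T_d − λ_d I) is left invertible if and only if the tuple Δ_t(T) − λ = (P^t V_1 P^{1−t} − λ_1 I, …, P^t V_d P^{1−t} − λ_d I) is left invertible. -/
open scoped InnerProductSpace ComplexConjugate NNReal

private lemma isUnit_of_sq' {M : Type*} [Monoid M] {a : M} (h : IsUnit (a * a)) : IsUnit a := by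
  obtain ⟨u, hu⟩ := h
  have hcomm : Commute a (a * a) := (Commute.refl a).mul_right (Commute.refl a)
  have hcommu : Commute a ↑u⁻¹ := by
    have : Commute a ↑u := hu ▸ hcomm
    exact this.units_inv_right
  refine isUnit_iff_exists.mpr ⟨a * ↑u⁻¹, ?_, ?_⟩
  · rw [← mul_assoc, ← hu, Units.mul_inv]
  · rw [mul_assoc, ← hcommu.eq, ← mul_assoc, ← hu, Units.mul_inv]

section Aux
variable {H : Type*} [NormedAddCommGroup H] [InnerProductSpace ℂ H] [CompleteSpace H]

private lemma myrpow_add {P : H →L[ℂ] H} (hP : 0 ≤ P) {x y : ℝ} (hx : 0 ≤ x) (hy : 0 ≤ y)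
    (hxy : x + y ≠ 0) :
    CFC.rpow P (x + y) = CFC.rpow P x * CFC.rpow P y := by
  simp only [CFC.rpow_eq_pow, CFC.rpow_def]
  rw [← cfc_mul (fun z : ℝ≥0 => z ^ x) (fun z : ℝ≥0 => z ^ y) P
    (NNReal.continuousOn_rpow_const (.inr hx)) (NNReal.continuousOn_rpow_const (.inr hy))]
  exact cfc_congr fun z _ => NNReal.rpow_add' hxy z

private lemma myrpow_sa {P : H →L[ℂ] H} (s : ℝ) : IsSelfAdjoint (CFC.rpow P s) :=
  ((ContinuousLinearMap.nonneg_iff_isPositive _).mp CFC.rpow_nonneg).isSelfAdjoint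

private lemma inner_starmul (S : H →L[ℂ] H) (x : H) :
    ⟪(star S * S) x, x⟫_ℂ = ((‖S x‖^2 : ℝ) : ℂ) := by
  rw [ContinuousLinearMap.mul_apply, ContinuousLinearMap.star_eq_adjoint,
    ContinuousLinearMap.adjoint_inner_left, inner_self_eq_norm_sq_to_K]
  norm_cast

private lemma inner_sumQ {d : ℕ} (S : Fin d → (H →L[ℂ] H)) (x : H) :
    ⟪(∑ i, star (S i) * S i) x, x⟫_ℂ = ((∑ i, ‖S i x‖^2 : ℝ) : ℂ) := by
  rw [ContinuousLinearMap.sum_apply, sum_inner]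
  push_cast
  refine Finset.sum_congr rfl fun i _ => ?_
  rw [Function.comp_apply, ← ContinuousLinearMap.mul_apply, inner_starmul (S i) x]
  norm_cast

private lemma myrpow_ker {P : H →L[ℂ] H} (hP : 0 ≤ P) {z : H} (hz : P z = 0) :
    ∀ s : ℝ, 0 < s → CFC.rpow P s z = 0 := by
  have key : ∀ n : ℕ, ∀ s : ℝ, 0 < s → 1 ≤ 2 ^ n * s → CFC.rpow P s z = 0 := by
    intro n
    induction n with
    | zero =>
      intro s hs h1
      simp only [pow_zero, one_mul] at h1
      have : CFC.rpow P s = CFC.rpow P (s - 1) * CFC.rpow P 1 := by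
        rw [← myrpow_add hP (by linarith) (by linarith) (by linarith)]; ring_nf
      have h1' : CFC.rpow P (1:ℝ) = P := by rw [CFC.rpow_eq_pow]; exact CFC.rpow_one P hP
      rw [this, ContinuousLinearMap.mul_apply, h1', hz, map_zero]
    | succ n ih =>
      intro s hs h1
      have h2 : CFC.rpow P (2 * s) z = 0 := by
        refine ih (2 * s) (by linarith) ?_
        rw [pow_succ] at h1; linarith [h1]
      have hsum : CFC.rpow P (s + s) = CFC.rpow P s * CFC.rpow P s :=
        myrpow_add hP (by linarith) (by linarith) (by linarith)
      have : ⟪CFC.rpow P s z, CFC.rpow P s z⟫_ℂ = 0 := by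
        rw [← ContinuousLinearMap.adjoint_inner_left, ← ContinuousLinearMap.star_eq_adjoint,
          (myrpow_sa (P := P) s).star_eq, ← ContinuousLinearMap.mul_apply, ← hsum]
        have : s + s = 2 * s := by ring
        rw [this, h2, inner_zero_left]
      simpa using inner_self_eq_zero.mp this
  intro s hs
  obtain ⟨n, hn⟩ := pow_unbounded_of_one_lt (1/s) (by norm_num : (1:ℝ) < 2)
  refine key n s hs ?_
  rw [div_lt_iff₀ hs] at hn
  nlinarith

private lemma isUnit_sumQ {d : ℕ} (S : Fin d → (H →L[ℂ] H)) {c : ℝ} (hc : 0 < c)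
    (h : ∀ x, c * ‖x‖^2 ≤ ∑ i, ‖S i x‖^2) : IsUnit (∑ i, star (S i) * S i) := by
  refine ContinuousLinearMap.isUnit_of_forall_le_norm_inner_map _ (c := ⟨c, hc.le⟩)
    (by exact_mod_cast hc) fun x => ?_
  rw [inner_sumQ]
  have h1 : (0:ℝ) ≤ ∑ i, ‖S i x‖^2 := Finset.sum_nonneg fun i _ => sq_nonneg _
  rw [Complex.norm_real, Real.norm_eq_abs, abs_of_nonneg h1]
  calc ‖x‖^2 * c = c * ‖x‖^2 := by ring
  _ ≤ _ := h x

private lemma leftInv_of_bdd {d : ℕ} (S : Fin d → (H →L[ℂ] H)) {c : ℝ} (hc : 0 < c)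
    (h : ∀ x, c * ‖x‖^2 ≤ ∑ i, ‖S i x‖^2) :
    ∃ A : Fin d → H →L[ℂ] H, ∑ i, A i * S i = 1 := by
  obtain ⟨u, hu⟩ := isUnit_sumQ S hc h
  refine ⟨fun i => ↑u⁻¹ * star (S i), ?_⟩
  calc ∑ i, ↑u⁻¹ * star (S i) * S i = ↑u⁻¹ * ∑ i, star (S i) * S i := by
        rw [Finset.mul_sum]; exact Finset.sum_congr rfl fun i _ => (mul_assoc _ _ _)
  _ = 1 := by rw [← hu, Units.inv_mul]

private lemma bdd_of_leftInv {d : ℕ} (S : Fin d → (H →L[ℂ] H))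
    (h : ∃ A : Fin d → H →L[ℂ] H, ∑ i, A i * S i = 1) :
    ∃ c : ℝ, 0 < c ∧ ∀ x, c * ‖x‖^2 ≤ ∑ i, ‖S i x‖^2 := by
  obtain ⟨A, hA⟩ := h
  set C : ℝ := ∑ i, ‖A i‖^2 with hC
  have hC0 : 0 ≤ C := Finset.sum_nonneg fun i _ => sq_nonneg _
  have key : ∀ x : H, ‖x‖^2 ≤ C * ∑ i, ‖S i x‖^2 := by
    intro x
    have h1 : ‖x‖ ≤ ∑ i, ‖A i‖ * ‖S i x‖ := by
      calc ‖x‖ = ‖(∑ i, A i * S i) x‖ := by rw [hA]; simp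
      _ = ‖∑ i, (A i) ((S i) x)‖ := by rw [ContinuousLinearMap.sum_apply]; rfl
      _ ≤ ∑ i, ‖(A i) ((S i) x)‖ := norm_sum_le _ _
      _ ≤ ∑ i, ‖A i‖ * ‖S i x‖ :=
        Finset.sum_le_sum fun i _ => (A i).le_opNorm _
    have h2 : (∑ i, ‖A i‖ * ‖S i x‖)^2 ≤ C * ∑ i, ‖S i x‖^2 :=
      Finset.sum_mul_sq_le_sq_mul_sq _ _ _
    calc ‖x‖^2 ≤ (∑ i, ‖A i‖ * ‖S i x‖)^2 := by
          apply pow_le_pow_left₀ (norm_nonneg x) h1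
    _ ≤ _ := h2
  rcases eq_or_lt_of_le hC0 with hC0' | hC0'
  · refine ⟨1, one_pos, fun x => ?_⟩
    have := key x
    rw [← hC0', zero_mul] at this
    have hx : ‖x‖^2 = 0 := le_antisymm this (sq_nonneg _)
    rw [one_mul, hx]
    exact Finset.sum_nonneg fun i _ => sq_nonneg _
  · refine ⟨C⁻¹, inv_pos.mpr hC0', fun x => ?_⟩
    rw [inv_mul_le_iff₀ hC0']
    exact key x

end Aux

set_option maxHeartbeats 2000000 in
/-- For `0 ≤ t < 1`: the left (Harte) spectra of `T` and `Δₜ(T)` coincide: `T - λ` is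
left invertible iff `Δₜ(T) - λ` is left invertible. -/
theorem left_spectrum_of_spherical_aluthge
    {H : Type*} [NormedAddCommGroup H] [InnerProductSpace ℂ H] [CompleteSpace H]
    {d : ℕ} (hd : 1 ≤ d) (T V : Fin d → H →L[ℂ] H) (P : H →L[ℂ] H)
    (hcomm : ∀ i j, T i * T j = T j * T i)
    (hPpos : 0 ≤ P)
    (hP2 : P * P = ∑ i, star (T i) * T i)
    (hpolar : ∀ i, T i = V i * P)
    (hproj : ∑ i, star (V i) * V i =
      ((LinearMap.ker (P : H →ₗ[ℂ] H))ᗮ).subtypeL.comp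
        (Submodule.orthogonalProjectionOnto (LinearMap.ker (P : H →ₗ[ℂ] H))ᗮ))
    (t : ℝ) (ht0 : 0 ≤ t) (ht1 : t < 1) (lam : Fin d → ℂ) :
    (∃ A : Fin d → H →L[ℂ] H, ∑ i, A i * (T i - lam i • 1) = 1) ↔
      (∃ A : Fin d → H →L[ℂ] H,
        ∑ i, A i * (CFC.rpow P t * V i * CFC.rpow P (1 - t) - lam i • 1) = 1) := by
  set Pt := CFC.rpow P t with hPtdef
  set Ps := CFC.rpow P (1 - t) with hPsdef
  set B : Fin d → H →L[ℂ] H := fun i => V i * Ps with hBdef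
  have hPsa : IsSelfAdjoint P :=
    ((ContinuousLinearMap.nonneg_iff_isPositive P).mp hPpos).isSelfAdjoint
  -- P^{1-t} * P^t = P
  have hfact : Ps * Pt = P := by
    have h := myrpow_add hPpos (x := 1 - t) (y := t) (by linarith) ht0 (by norm_num)
    have h1 : CFC.rpow P ((1 - t) + t) = CFC.rpow P 1 := by norm_num
    have h2 : CFC.rpow P (1:ℝ) = P := by rw [CFC.rpow_eq_pow]; exact CFC.rpow_one P hPpos
    rw [h1, h2] at h
    exact h.symm
  have hT_eq : ∀ i, T i = B i * Pt := by
    intro i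
    rw [hpolar i, hBdef, ← hfact, mul_assoc]
  -- commutation: (T i * V j) * Ps = (T j * V i) * Ps
  have hcomm2 : ∀ i j, (T i * V j) * Ps = (T j * V i) * Ps := by
    intro i j
    have hD : (T i * V j - T j * V i) * P = 0 := by
      have h0 : (T i * V j) * P = (T j * V i) * P := by
        calc (T i * V j) * P = T i * T j := by rw [mul_assoc, ← hpolar j]
        _ = T j * T i := hcomm i j
        _ = (T j * V i) * P := by rw [mul_assoc, ← hpolar i]
      rw [sub_mul, h0, sub_self]
    set D := T i * V j - T j * V i with hDdef
    have hD2 : P * star D = 0 := by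
      have := congrArg star hD
      rwa [star_mul, star_zero, hPsa.star_eq] at this
    have hD3 : Ps * star D = 0 := by
      ext z
      have hz : P ((star D) z) = 0 := by
        have := ContinuousLinearMap.ext_iff.mp hD2 z
        rwa [ContinuousLinearMap.mul_apply, ContinuousLinearMap.zero_apply] at this
      simp only [ContinuousLinearMap.mul_apply, ContinuousLinearMap.zero_apply]
      exact myrpow_ker hPpos hz (1 - t) (by linarith)
    have hD4 : D * Ps = 0 := by
      have := congrArg star hD3
      rwa [star_mul, star_zero, star_star, (myrpow_sa (P := P) (1 - t)).star_eq] at this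
    rw [hDdef, sub_mul, sub_eq_zero] at hD4
    exact hD4
  have hTB : ∀ i j, T i * B j = B j * (Pt * V i * Ps) := by
    intro i j
    calc T i * B j = (T i * V j) * Ps := by rw [hBdef, mul_assoc]
    _ = (T j * V i) * Ps := hcomm2 i j
    _ = ((V j * P) * V i) * Ps := by rw [← hpolar j]
    _ = ((V j * (Ps * Pt)) * V i) * Ps := by rw [hfact]
    _ = B j * (Pt * V i * Ps) := by simp only [hBdef, mul_assoc]
  have hPtB : ∀ j, Pt * B j = Pt * V j * Ps := fun j => (mul_assoc _ _ _).symm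
  have hDPt : ∀ i, (Pt * V i * Ps) * Pt = Pt * T i := by
    intro i
    calc (Pt * V i * Ps) * Pt = Pt * (V i * (Ps * Pt)) := by simp only [mul_assoc]
    _ = Pt * (V i * P) := by rw [hfact]
    _ = Pt * T i := by rw [← hpolar i]
  by_cases hlam : lam = 0
  · -- zero tuple case
    simp only [hlam, Pi.zero_apply, zero_smul, sub_zero]
    constructor
    · rintro h
      obtain ⟨c, hc, hbdd⟩ := bdd_of_leftInv T h
      -- P is bounded below, hence a unit
      have hinner : ∀ x : H, ⟪(P * P) x, x⟫_ℂ = ((‖P x‖^2 : ℝ) : ℂ) := by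
        intro x
        have h0 := inner_starmul P x
        rwa [hPsa.star_eq] at h0
      have hPx : ∀ x : H, c * ‖x‖^2 ≤ ‖P x‖^2 := by
        intro x
        have h1 : ((∑ i, ‖T i x‖^2 : ℝ) : ℂ) = ((‖P x‖^2 : ℝ) : ℂ) := by
          rw [← inner_sumQ, ← hP2, hinner]
        have h2 : (∑ i, ‖T i x‖^2 : ℝ) = ‖P x‖^2 := by exact_mod_cast h1
        rw [← h2]; exact hbdd x
      have hPPu : IsUnit (P * P) := by
        refine ContinuousLinearMap.isUnit_of_forall_le_norm_inner_map _ (c := ⟨c, hc.le⟩)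
          (by exact_mod_cast hc) fun x => ?_
        rw [hinner, Complex.norm_real, Real.norm_eq_abs, abs_of_nonneg (sq_nonneg _)]
        calc ‖x‖^2 * c = c * ‖x‖^2 := by ring
        _ ≤ _ := hPx x
      have hPu : IsUnit P := isUnit_of_sq' hPPu
      have hspec : (0 : ℝ≥0) ∉ spectrum ℝ≥0 P := spectrum.zero_notMem ℝ≥0 hPu
      have hker : LinearMap.ker (P : H →ₗ[ℂ] H) = ⊥ :=
        LinearMap.ker_eq_bot.mpr (ContinuousLinearMap.isUnit_iff_bijective.mp hPu).injective
      have hK : (LinearMap.ker (P : H →ₗ[ℂ] H))ᗮ = ⊤ := by rw [hker, Submodule.bot_orthogonal_eq_top]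
      have hsumV : (∑ i, star (V i) * V i) = 1 := by
        rw [hproj]
        ext x
        rw [ContinuousLinearMap.comp_apply, Submodule.subtypeL_apply,
          ContinuousLinearMap.one_apply]
        exact Submodule.starProjection_eq_self_iff.mpr (by rw [hK]; trivial)
      have hinv_t : CFC.rpow P (-t) * Pt = 1 := CFC.rpow_neg_mul_rpow t (IsStrictlyPositive.iff_of_unital.mpr ⟨hPpos, hPu⟩)
      have hinv_s : CFC.rpow P (t - 1) * Ps = 1 := by
        have h := CFC.rpow_neg_mul_rpow (1 - t) (IsStrictlyPositive.iff_of_unital.mpr ⟨hPpos, hPu⟩)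
        have he : -(1 - t) = t - 1 := by ring
        rw [he] at h
        exact h
      refine ⟨fun i => CFC.rpow P (t - 1) * (star (V i) * CFC.rpow P (-t)), ?_⟩
      have hterm : ∀ i, CFC.rpow P (t - 1) * (star (V i) * CFC.rpow P (-t)) * (Pt * V i * Ps)
          = CFC.rpow P (t - 1) * ((star (V i) * V i) * Ps) := by
        intro i
        calc CFC.rpow P (t - 1) * (star (V i) * CFC.rpow P (-t)) * (Pt * V i * Ps)
            = CFC.rpow P (t - 1) * (star (V i) * ((CFC.rpow P (-t) * Pt) * (V i * Ps))) := by
              simp only [mul_assoc]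
        _ = CFC.rpow P (t - 1) * (star (V i) * (V i * Ps)) := by rw [hinv_t, one_mul]
        _ = CFC.rpow P (t - 1) * ((star (V i) * V i) * Ps) := by rw [mul_assoc]
      calc ∑ i, CFC.rpow P (t - 1) * (star (V i) * CFC.rpow P (-t)) * (Pt * V i * Ps)
          = ∑ i, CFC.rpow P (t - 1) * ((star (V i) * V i) * Ps) :=
            Finset.sum_congr rfl fun i _ => hterm i
      _ = CFC.rpow P (t - 1) * ((∑ i, star (V i) * V i) * Ps) := by
            simp only [Finset.sum_mul, Finset.mul_sum]
      _ = 1 := by rw [hsumV, one_mul, hinv_s]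
    · rintro h
      obtain ⟨c, hc, hbdd⟩ := bdd_of_leftInv _ h
      -- Ps is bounded below
      set Q : H →L[ℂ] H := ∑ i, star (V i) * V i with hQdef
      have hVsum : ∀ y : H, ∑ i, ‖V i y‖^2 ≤ ‖Q‖ * ‖y‖^2 := by
        intro y
        have h1 : ((∑ i, ‖V i y‖^2 : ℝ) : ℂ) = ⟪Q y, y⟫_ℂ := (inner_sumQ V y).symm
        have h2 : (∑ i, ‖V i y‖^2 : ℝ) = (⟪Q y, y⟫_ℂ).re := by
          rw [← h1, Complex.ofReal_re]
        rw [h2]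
        calc (⟪Q y, y⟫_ℂ).re ≤ ‖⟪Q y, y⟫_ℂ‖ := Complex.re_le_norm _
        _ = ‖⟪Q y, y⟫_ℂ‖ := rfl
        _ ≤ ‖Q y‖ * ‖y‖ := norm_inner_le_norm _ _
        _ ≤ ‖Q‖ * ‖y‖ * ‖y‖ := by
              have := Q.le_opNorm y
              have h0 : (0:ℝ) ≤ ‖y‖ := norm_nonneg _
              nlinarith
        _ = ‖Q‖ * ‖y‖^2 := by ring
      set D0 : ℝ := ‖Pt‖^2 * ‖Q‖ with hD0def
      have hD0 : 0 ≤ D0 := by positivity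
      have hPs_bdd : ∀ x : H, (c / (D0 + 1)) * ‖x‖^2 ≤ ‖Ps x‖^2 := by
        intro x
        have h1 : ∀ i, ‖(Pt * V i * Ps) x‖ ≤ ‖Pt‖ * ‖V i (Ps x)‖ := by
          intro i
          calc ‖(Pt * V i * Ps) x‖ = ‖Pt (V i (Ps x))‖ := by
                rw [ContinuousLinearMap.mul_apply, ContinuousLinearMap.mul_apply]
          _ ≤ ‖Pt‖ * ‖V i (Ps x)‖ := Pt.le_opNorm _
        have h2 : ∑ i, ‖(Pt * V i * Ps) x‖^2 ≤ ‖Pt‖^2 * ∑ i, ‖V i (Ps x)‖^2 := by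
          rw [Finset.mul_sum]
          refine Finset.sum_le_sum fun i _ => ?_
          have := h1 i
          have h3 : ‖(Pt * V i * Ps) x‖^2 ≤ (‖Pt‖ * ‖V i (Ps x)‖)^2 :=
            pow_le_pow_left₀ (norm_nonneg _) this 2
          calc ‖(Pt * V i * Ps) x‖^2 ≤ (‖Pt‖ * ‖V i (Ps x)‖)^2 := h3
          _ = ‖Pt‖^2 * ‖V i (Ps x)‖^2 := by ring
        have h4 : c * ‖x‖^2 ≤ D0 * ‖Ps x‖^2 := by
          calc c * ‖x‖^2 ≤ ∑ i, ‖(Pt * V i * Ps) x‖^2 := hbdd x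
          _ ≤ ‖Pt‖^2 * ∑ i, ‖V i (Ps x)‖^2 := h2
          _ ≤ ‖Pt‖^2 * (‖Q‖ * ‖Ps x‖^2) := by
                have := hVsum (Ps x)
                have h0 : (0:ℝ) ≤ ‖Pt‖^2 := sq_nonneg _
                exact mul_le_mul_of_nonneg_left this h0
          _ = D0 * ‖Ps x‖^2 := by rw [hD0def]; ring
        have h5 : c * ‖x‖^2 ≤ (D0 + 1) * ‖Ps x‖^2 := by nlinarith [sq_nonneg ‖Ps x‖]
        rw [div_mul_eq_mul_div, div_le_iff₀ (by linarith : (0:ℝ) < D0 + 1)]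
        calc c * ‖x‖^2 ≤ (D0 + 1) * ‖Ps x‖^2 := h5
        _ = ‖Ps x‖^2 * (D0 + 1) := by ring
      have hc1 : 0 < c / (D0 + 1) := by positivity
      have hPs_sa : IsSelfAdjoint Ps := myrpow_sa (1 - t)
      have hinnerPs : ∀ x : H, ⟪(Ps * Ps) x, x⟫_ℂ = ((‖Ps x‖^2 : ℝ) : ℂ) := by
        intro x
        have h0 := inner_starmul Ps x
        rwa [hPs_sa.star_eq] at h0
      have hPsu : IsUnit Ps := by
        refine isUnit_of_sq' ?_
        refine ContinuousLinearMap.isUnit_of_forall_le_norm_inner_map _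
          (c := ⟨c / (D0 + 1), hc1.le⟩) (by exact_mod_cast hc1) fun x => ?_
        rw [hinnerPs, Complex.norm_real, Real.norm_eq_abs, abs_of_nonneg (sq_nonneg _)]
        calc ‖x‖^2 * (c / (D0 + 1)) = (c / (D0 + 1)) * ‖x‖^2 := by ring
        _ ≤ _ := hPs_bdd x
      -- spectral mapping: P is a unit
      have hspecPs : (0 : ℝ≥0) ∉ spectrum ℝ≥0 Ps := spectrum.zero_notMem ℝ≥0 hPsu
      have hmap : spectrum ℝ≥0 Ps = (fun z : ℝ≥0 => z ^ (1 - t)) '' spectrum ℝ≥0 P := by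
        rw [hPsdef]
        exact cfc_map_spectrum (f := fun z : ℝ≥0 => z ^ (1 - t)) (a := P) hPpos
          (NNReal.continuousOn_rpow_const (.inr (by linarith)))
      have hspecP : (0 : ℝ≥0) ∉ spectrum ℝ≥0 P := by
        intro h0
        apply hspecPs
        rw [hmap]
        exact ⟨0, h0, NNReal.zero_rpow (by linarith)⟩
      have hPu : IsUnit P := spectrum.isUnit_of_zero_notMem ℝ≥0 hspecP
      obtain ⟨u, hu⟩ := hPu.mul hPu
      refine ⟨fun i => ↑u⁻¹ * star (T i), ?_⟩
      calc ∑ i, ↑u⁻¹ * star (T i) * T i = ↑u⁻¹ * ∑ i, star (T i) * T i := by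
            rw [Finset.mul_sum]; exact Finset.sum_congr rfl fun i _ => mul_assoc _ _ _
      _ = ↑u⁻¹ * (P * P) := by rw [← hP2]
      _ = 1 := by rw [← hu, Units.inv_mul]
  · -- lam ≠ 0
    obtain ⟨i0, hi0⟩ := Function.ne_iff.mp hlam
    simp only [Pi.zero_apply] at hi0
    have hnorm0 : 0 < ‖lam i0‖ := norm_pos_iff.mpr hi0
    constructor
    · intro h
      obtain ⟨c, hc, hbdd⟩ := bdd_of_leftInv _ h
      set N2 : ℝ := ∑ j, ‖lam j‖^2 with hN2def
      have hN2 : 0 < N2 :=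
        Finset.sum_pos' (fun j _ => sq_nonneg _)
          ⟨i0, Finset.mem_univ i0, pow_pos hnorm0 2⟩
      set M : ℝ := ∑ j, ‖lam j‖ * ‖B j‖ with hMdef
      have hM0 : 0 ≤ M := Finset.sum_nonneg fun j _ => by positivity
      set K : ℝ := 2 * ‖Pt‖^2 * M^2 / c + 2 * N2 with hKdef
      have hK : 0 < K := by
        have h1 : 0 ≤ 2 * ‖Pt‖^2 * M^2 / c := div_nonneg (by positivity) hc.le
        have h2 : 0 < 2 * N2 := by linarith
        rw [hKdef]; linarith
      refine leftInv_of_bdd (fun i => Pt * V i * Ps - lam i • 1) (c := N2^2 / K)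
        (div_pos (pow_pos hN2 2) hK) fun x => ?_
      set E2 : ℝ := ∑ i, ‖(Pt * V i * Ps - lam i • 1) x‖^2 with hE2def
      have hE2nn : 0 ≤ E2 := Finset.sum_nonneg fun i _ => sq_nonneg _
      set y : H := ∑ j, (starRingEnd ℂ) (lam j) • (B j x) with hydef
      have claim1 : ∀ i, (T i - lam i • 1) y
          = ∑ j, (starRingEnd ℂ) (lam j) • (B j ((Pt * V i * Ps - lam i • 1) x)) := by
        intro i
        rw [hydef, map_sum]
        refine Finset.sum_congr rfl fun j _ => ?_
        rw [map_smul]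
        congr 1
        have h1 : T i (B j x) = B j ((Pt * V i * Ps) x) := by
          calc T i (B j x) = (T i * B j) x := rfl
          _ = (B j * (Pt * V i * Ps)) x := by rw [hTB i j]
          _ = B j ((Pt * V i * Ps) x) := rfl
        simp only [ContinuousLinearMap.sub_apply, ContinuousLinearMap.smul_apply,
          ContinuousLinearMap.one_apply, map_sub, map_smul, h1]
      have hTy : ∀ i, ‖(T i - lam i • 1) y‖ ≤ M * ‖(Pt * V i * Ps - lam i • 1) x‖ := by
        intro i
        rw [claim1 i]
        calc ‖∑ j, (starRingEnd ℂ) (lam j) • (B j ((Pt * V i * Ps - lam i • 1) x))‖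
            ≤ ∑ j, ‖(starRingEnd ℂ) (lam j) • (B j ((Pt * V i * Ps - lam i • 1) x))‖ :=
              norm_sum_le _ _
        _ ≤ ∑ j, ‖lam j‖ * ‖B j‖ * ‖(Pt * V i * Ps - lam i • 1) x‖ := by
              refine Finset.sum_le_sum fun j _ => ?_
              calc ‖(starRingEnd ℂ) (lam j) • (B j ((Pt * V i * Ps - lam i • 1) x))‖
                  = ‖lam j‖ * ‖B j ((Pt * V i * Ps - lam i • 1) x)‖ := by
                    rw [norm_smul, RCLike.norm_conj]
              _ ≤ ‖lam j‖ * (‖B j‖ * ‖(Pt * V i * Ps - lam i • 1) x‖) :=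
                    mul_le_mul_of_nonneg_left ((B j).le_opNorm _) (norm_nonneg (lam j))
              _ = ‖lam j‖ * ‖B j‖ * ‖(Pt * V i * Ps - lam i • 1) x‖ := (mul_assoc _ _ _).symm
        _ = M * ‖(Pt * V i * Ps - lam i • 1) x‖ := by rw [hMdef, Finset.sum_mul]
      have hTy2 : ∑ i, ‖(T i - lam i • 1) y‖^2 ≤ M^2 * E2 := by
        rw [hE2def, Finset.mul_sum]
        refine Finset.sum_le_sum fun i _ => ?_
        have h1 := pow_le_pow_left₀ (norm_nonneg _) (hTy i) 2
        calc ‖(T i - lam i • 1) y‖^2 ≤ (M * ‖(Pt * V i * Ps - lam i • 1) x‖)^2 := h1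
        _ = M^2 * ‖(Pt * V i * Ps - lam i • 1) x‖^2 := by ring
      have hy2 : ‖y‖^2 ≤ M^2 * E2 / c := by
        rw [le_div_iff₀ hc]
        calc ‖y‖^2 * c = c * ‖y‖^2 := by ring
        _ ≤ ∑ i, ‖(T i - lam i • 1) y‖^2 := hbdd y
        _ ≤ M^2 * E2 := hTy2
      have claim2 : ((N2 : ℝ) : ℂ) • x
          = Pt y - ∑ j, (starRingEnd ℂ) (lam j) • ((Pt * V j * Ps - lam j • 1) x) := by
        have hPty : Pt y = ∑ j, (starRingEnd ℂ) (lam j) • ((Pt * V j * Ps) x) := by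
          rw [hydef, map_sum]
          refine Finset.sum_congr rfl fun j _ => ?_
          have hq : Pt ((B j) x) = (Pt * V j * Ps) x := by rw [← hPtB j]; rfl
          rw [map_smul, hq]
        rw [hPty, ← Finset.sum_sub_distrib]
        have heach : ∀ j, (starRingEnd ℂ) (lam j) • ((Pt * V j * Ps) x)
            - (starRingEnd ℂ) (lam j) • ((Pt * V j * Ps - lam j • 1) x)
            = (((‖lam j‖^2 : ℝ)) : ℂ) • x := by
          intro j
          rw [← smul_sub]
          have h1 : (Pt * V j * Ps) x - (Pt * V j * Ps - lam j • 1) x = lam j • x := by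
            simp only [ContinuousLinearMap.sub_apply, ContinuousLinearMap.smul_apply,
              ContinuousLinearMap.one_apply, sub_sub_cancel]
          rw [h1, smul_smul, RCLike.conj_mul]
          norm_cast
        rw [Finset.sum_congr rfl fun j _ => heach j, ← Finset.sum_smul]
        congr 1
        rw [hN2def]
        push_cast
        rfl
      have hx1 : N2 * ‖x‖ ≤ ‖Pt‖ * ‖y‖ + ∑ j, ‖lam j‖ * ‖(Pt * V j * Ps - lam j • 1) x‖ := by
        have h1 : ‖(((N2 : ℝ)) : ℂ) • x‖ = N2 * ‖x‖ := by
          rw [norm_smul, Complex.norm_real, Real.norm_eq_abs, abs_of_nonneg hN2.le]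
        calc N2 * ‖x‖ = ‖(((N2 : ℝ)) : ℂ) • x‖ := h1.symm
        _ = ‖Pt y - ∑ j, (starRingEnd ℂ) (lam j) • ((Pt * V j * Ps - lam j • 1) x)‖ := by
              rw [claim2]
        _ ≤ ‖Pt y‖ + ‖∑ j, (starRingEnd ℂ) (lam j) • ((Pt * V j * Ps - lam j • 1) x)‖ :=
              norm_sub_le _ _
        _ ≤ ‖Pt‖ * ‖y‖ + ∑ j, ‖lam j‖ * ‖(Pt * V j * Ps - lam j • 1) x‖ := by
              refine add_le_add (Pt.le_opNorm y) ?_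
              calc ‖∑ j, (starRingEnd ℂ) (lam j) • ((Pt * V j * Ps - lam j • 1) x)‖
                  ≤ ∑ j, ‖(starRingEnd ℂ) (lam j) • ((Pt * V j * Ps - lam j • 1) x)‖ :=
                    norm_sum_le _ _
              _ = ∑ j, ‖lam j‖ * ‖(Pt * V j * Ps - lam j • 1) x‖ := by
                    refine Finset.sum_congr rfl fun j _ => ?_
                    rw [norm_smul, RCLike.norm_conj]
      have hCS : (∑ j, ‖lam j‖ * ‖(Pt * V j * Ps - lam j • 1) x‖)^2 ≤ N2 * E2 :=
        Finset.sum_mul_sq_le_sq_mul_sq _ _ _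
      -- combine
      set Ssum : ℝ := ∑ j, ‖lam j‖ * ‖(Pt * V j * Ps - lam j • 1) x‖ with hSdef
      have hS0 : 0 ≤ Ssum := Finset.sum_nonneg fun j _ => by positivity
      have hsq : (N2 * ‖x‖)^2 ≤ (‖Pt‖ * ‖y‖ + Ssum)^2 :=
        pow_le_pow_left₀ (by positivity) hx1 2
      have h2ab : (‖Pt‖ * ‖y‖ + Ssum)^2 ≤ 2 * (‖Pt‖ * ‖y‖)^2 + 2 * Ssum^2 := by
        nlinarith [sq_nonneg (‖Pt‖ * ‖y‖ - Ssum)]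
      have hyy : 2 * (‖Pt‖ * ‖y‖)^2 ≤ 2 * ‖Pt‖^2 * (M^2 * E2 / c) := by
        have h1 : (‖Pt‖ * ‖y‖)^2 = ‖Pt‖^2 * ‖y‖^2 := by ring
        rw [h1]
        nlinarith [sq_nonneg ‖Pt‖]
      have hfinal : N2^2 * ‖x‖^2 ≤ K * E2 := by
        have e2 : 2 * ‖Pt‖^2 * (M^2 * E2 / c) + 2 * (N2 * E2) = K * E2 := by
          rw [hKdef]; field_simp
        have step : N2^2 * ‖x‖^2 ≤ 2 * ‖Pt‖^2 * (M^2 * E2 / c) + 2 * (N2 * E2) := by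
          have h3 : 2 * Ssum^2 ≤ 2 * (N2 * E2) := by linarith
          calc N2^2 * ‖x‖^2 = (N2 * ‖x‖)^2 := by ring
          _ ≤ (‖Pt‖ * ‖y‖ + Ssum)^2 := hsq
          _ ≤ 2 * (‖Pt‖ * ‖y‖)^2 + 2 * Ssum^2 := h2ab
          _ ≤ 2 * ‖Pt‖^2 * (M^2 * E2 / c) + 2 * (N2 * E2) := by linarith [hyy]
        rw [← e2]
        exact step
      rw [div_mul_eq_mul_div, div_le_iff₀ hK]
      calc N2^2 * ‖x‖^2 ≤ K * E2 := hfinal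
      _ = E2 * K := by ring
    · intro h
      obtain ⟨c, hc, hbdd⟩ := bdd_of_leftInv (fun i => Pt * V i * Ps - lam i • 1) h
      set K' : ℝ := 2 + 2 * ‖B i0‖^2 * ‖Pt‖^2 / c with hK'def
      have hK' : 0 < K' := by
        have h1 : 0 ≤ 2 * ‖B i0‖^2 * ‖Pt‖^2 / c := div_nonneg (by positivity) hc.le
        rw [hK'def]; linarith
      refine leftInv_of_bdd (fun i => T i - lam i • 1) (c := ‖lam i0‖^2 / K')
        (div_pos (pow_pos hnorm0 2) hK') fun x => ?_
      set F2 : ℝ := ∑ i, ‖(T i - lam i • 1) x‖^2 with hF2def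
      have hF2nn : 0 ≤ F2 := Finset.sum_nonneg fun i _ => sq_nonneg _
      have claimL : ∀ i, (Pt * V i * Ps - lam i • 1) (Pt x) = Pt ((T i - lam i • 1) x) := by
        intro i
        have h1 : (Pt * V i * Ps) (Pt x) = Pt (T i x) := by
          calc (Pt * V i * Ps) (Pt x) = ((Pt * V i * Ps) * Pt) x := rfl
          _ = (Pt * T i) x := by rw [hDPt i]
          _ = Pt (T i x) := rfl
        simp only [ContinuousLinearMap.sub_apply, ContinuousLinearMap.smul_apply,
          ContinuousLinearMap.one_apply, map_sub, map_smul, h1]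
      have hPtx2 : ‖Pt x‖^2 ≤ ‖Pt‖^2 * F2 / c := by
        rw [le_div_iff₀ hc]
        calc ‖Pt x‖^2 * c = c * ‖Pt x‖^2 := by ring
        _ ≤ ∑ i, ‖(Pt * V i * Ps - lam i • 1) (Pt x)‖^2 := hbdd (Pt x)
        _ = ∑ i, ‖Pt ((T i - lam i • 1) x)‖^2 := by
              exact Finset.sum_congr rfl fun i _ => by rw [claimL i]
        _ ≤ ∑ i, ‖Pt‖^2 * ‖(T i - lam i • 1) x‖^2 := by
              refine Finset.sum_le_sum fun i _ => ?_
              have h1 := pow_le_pow_left₀ (norm_nonneg _) (Pt.le_opNorm ((T i - lam i • 1) x)) 2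
              calc ‖Pt ((T i - lam i • 1) x)‖^2
                  ≤ (‖Pt‖ * ‖(T i - lam i • 1) x‖)^2 := h1
              _ = ‖Pt‖^2 * ‖(T i - lam i • 1) x‖^2 := by ring
        _ = ‖Pt‖^2 * F2 := by rw [hF2def, Finset.mul_sum]
      have hf0 : ‖(T i0 - lam i0 • 1) x‖^2 ≤ F2 := by
        rw [hF2def]
        exact Finset.single_le_sum (f := fun i => ‖(T i - lam i • 1) x‖^2)
          (fun i _ => sq_nonneg _) (Finset.mem_univ i0)
      have hTx : ‖T i0 x‖ ≤ ‖B i0‖ * ‖Pt x‖ := by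
        calc ‖T i0 x‖ = ‖(B i0 * Pt) x‖ := by rw [← hT_eq i0]
        _ = ‖B i0 (Pt x)‖ := rfl
        _ ≤ ‖B i0‖ * ‖Pt x‖ := (B i0).le_opNorm _
      have hx1 : ‖lam i0‖ * ‖x‖ ≤ ‖(T i0 - lam i0 • 1) x‖ + ‖B i0‖ * ‖Pt x‖ := by
        have h1 : lam i0 • x = T i0 x - (T i0 - lam i0 • 1) x := by
          simp only [ContinuousLinearMap.sub_apply, ContinuousLinearMap.smul_apply,
            ContinuousLinearMap.one_apply, sub_sub_cancel]
        calc ‖lam i0‖ * ‖x‖ = ‖lam i0 • x‖ := (norm_smul _ _).symm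
        _ = ‖T i0 x - (T i0 - lam i0 • 1) x‖ := by rw [h1]
        _ ≤ ‖T i0 x‖ + ‖(T i0 - lam i0 • 1) x‖ := norm_sub_le _ _
        _ ≤ ‖B i0‖ * ‖Pt x‖ + ‖(T i0 - lam i0 • 1) x‖ := by
              exact add_le_add_left hTx _
        _ = ‖(T i0 - lam i0 • 1) x‖ + ‖B i0‖ * ‖Pt x‖ := by ring
      have hsq : (‖lam i0‖ * ‖x‖)^2
          ≤ (‖(T i0 - lam i0 • 1) x‖ + ‖B i0‖ * ‖Pt x‖)^2 :=
        pow_le_pow_left₀ (by positivity) hx1 2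
      have h2ab : (‖(T i0 - lam i0 • 1) x‖ + ‖B i0‖ * ‖Pt x‖)^2
          ≤ 2 * ‖(T i0 - lam i0 • 1) x‖^2 + 2 * (‖B i0‖ * ‖Pt x‖)^2 := by
        nlinarith [sq_nonneg (‖(T i0 - lam i0 • 1) x‖ - ‖B i0‖ * ‖Pt x‖)]
      have hfinal : ‖lam i0‖^2 * ‖x‖^2 ≤ K' * F2 := by
        have h3 : 2 * (‖B i0‖ * ‖Pt x‖)^2 ≤ 2 * ‖B i0‖^2 * (‖Pt‖^2 * F2 / c) := by
          nlinarith [sq_nonneg ‖B i0‖]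
        have e3 : 2 * F2 + 2 * ‖B i0‖^2 * (‖Pt‖^2 * F2 / c) = K' * F2 := by
          rw [hK'def]; field_simp
        have step : ‖lam i0‖^2 * ‖x‖^2
            ≤ 2 * F2 + 2 * ‖B i0‖^2 * (‖Pt‖^2 * F2 / c) := by
          calc ‖lam i0‖^2 * ‖x‖^2 = (‖lam i0‖ * ‖x‖)^2 := by ring
          _ ≤ (‖(T i0 - lam i0 • 1) x‖ + ‖B i0‖ * ‖Pt x‖)^2 := hsq
          _ ≤ 2 * ‖(T i0 - lam i0 • 1) x‖^2 + 2 * (‖B i0‖ * ‖Pt x‖)^2 := h2ab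
          _ ≤ 2 * F2 + 2 * ‖B i0‖^2 * (‖Pt‖^2 * F2 / c) := by linarith [hf0, h3]
        rw [← e3]
        exact step
      rw [div_mul_eq_mul_div, div_le_iff₀ hK']
      calc ‖lam i0‖^2 * ‖x‖^2 ≤ K' * F2 := hfinal
      _ = F2 * K' := by ring
end

section
/- Let 0 < t ≤ 1. The right spectra satisfy σ_r(T) ⊆ σ_r(Δ_t(T)) ⊆ σ_r(T) ∪ {0}; explicitly: (a) for every λ ∈ ℂ^d, if the tuple Δ_t(T) − λ is right invertible then the tuple T − λ is right invertible; and (b) for every λ ∈ ℂ^d with λ ≠ 0, if T − λ is right invertible then Δ_t(T) − λ is right invertible. -/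
open scoped NNReal

local notation "⟪" x ", " y "⟫" => @inner ℂ _ _ x y

private lemma aux_descend {H : Type*} [NormedAddCommGroup H] [InnerProductSpace ℂ H]
    [CompleteSpace H] (A : H →L[ℂ] H) (hA : IsSelfAdjoint A) :
    ∀ n : ℕ, ∀ z : H, (A ^ (n + 1)) z = 0 → A z = 0 := by
  intro n
  induction n using Nat.strong_induction_on with
  | _ n IH =>
    intro z hz
    rcases Nat.eq_zero_or_pos n with hn | hn
    · subst hn; simpa using hz
    · set k := (n + 2) / 2 with hkdef
      have hzero : (A ^ (k + k)) z = 0 := by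
        have hsum : k + k = (k + k - (n + 1)) + (n + 1) := by omega
        rw [hsum, pow_add, ContinuousLinearMap.mul_apply, hz, map_zero]
      have hk : (A ^ k) z = 0 := by
        have hinner : ⟪(A ^ k) z, (A ^ k) z⟫ = 0 := by
          calc ⟪(A ^ k) z, (A ^ k) z⟫
              = ⟪(ContinuousLinearMap.adjoint (A ^ k)) ((A ^ k) z), z⟫ :=
                (ContinuousLinearMap.adjoint_inner_left (A ^ k) z ((A ^ k) z)).symm
            _ = ⟪(A ^ k) ((A ^ k) z), z⟫ := by rw [(hA.pow k).adjoint_eq]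
            _ = ⟪(A ^ (k + k)) z, z⟫ := by
                rw [pow_add, ContinuousLinearMap.mul_apply]
            _ = 0 := by rw [hzero, inner_zero_left]
        exact inner_self_eq_zero.mp hinner
      have hlt : k - 1 < n := by omega
      exact IH (k - 1) hlt z (by rwa [show k - 1 + 1 = k by omega])

private lemma aux_sum_trick {H : Type*} [NormedAddCommGroup H] [InnerProductSpace ℂ H]
    {d : ℕ} (S S' : Fin d → H →L[ℂ] H) (lam : Fin d → ℂ) (j : Fin d) (hj : lam j ≠ 0)
    (w q : H →L[ℂ] H) (hint : ∀ i, w * S i = S' i * w) (hq : w * q = S' j)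
    (B : Fin d → H →L[ℂ] H) (hB : ∑ i, (S i - lam i • 1) * B i = 1) :
    ∃ C : Fin d → H →L[ℂ] H, ∑ i, (S' i - lam i • 1) * C i = 1 := by
  have hint' : ∀ i, (S' i - lam i • 1) * w = w * (S i - lam i • 1) := fun i => by
    rw [sub_mul, mul_sub, hint i, smul_mul_assoc, mul_smul_comm, one_mul, mul_one]
  refine ⟨fun i => (lam j)⁻¹ • (w * B i * q - if i = j then 1 else 0), ?_⟩
  have key : ∑ i, (S' i - lam i • 1) * (w * B i * q) = S' j := by
    have h1 : ∀ i, (S' i - lam i • 1) * (w * B i * q)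
        = w * ((S i - lam i • 1) * B i) * q := fun i => by
      rw [← mul_assoc, ← mul_assoc, hint' i, mul_assoc w]
    calc ∑ i, (S' i - lam i • 1) * (w * B i * q)
        = ∑ i, w * ((S i - lam i • 1) * B i) * q :=
          Finset.sum_congr rfl fun i _ => h1 i
      _ = (∑ i, w * ((S i - lam i • 1) * B i)) * q := (Finset.sum_mul _ _ _).symm
      _ = (w * ∑ i, (S i - lam i • 1) * B i) * q := by rw [← Finset.mul_sum]
      _ = S' j := by rw [hB, mul_one, hq]
  have key2 : ∑ i, (S' i - lam i • 1) * (if i = j then (1 : H →L[ℂ] H) else 0)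
      = S' j - lam j • 1 := by
    simp only [mul_ite, mul_one, mul_zero, Finset.sum_ite_eq', Finset.mem_univ, if_true]
  calc ∑ i, (S' i - lam i • 1) * ((lam j)⁻¹ • (w * B i * q - if i = j then 1 else 0))
      = ∑ i, (lam j)⁻¹ • ((S' i - lam i • 1) * (w * B i * q)
          - (S' i - lam i • 1) * (if i = j then 1 else 0)) :=
        Finset.sum_congr rfl fun i _ => by rw [mul_smul_comm, mul_sub]
    _ = (lam j)⁻¹ • ∑ i, ((S' i - lam i • 1) * (w * B i * q)
          - (S' i - lam i • 1) * (if i = j then 1 else 0)) := (Finset.smul_sum).symm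
    _ = (lam j)⁻¹ • (∑ i, (S' i - lam i • 1) * (w * B i * q)
          - ∑ i, (S' i - lam i • 1) * (if i = j then 1 else 0)) := by
        rw [Finset.sum_sub_distrib]
    _ = 1 := by rw [key, key2, sub_sub_cancel, smul_smul, inv_mul_cancel₀ hj, one_smul]

set_option maxHeartbeats 1000000

/-- For `0 < t ≤ 1`: the right spectra satisfy `σᵣ(T) ⊆ σᵣ(Δₜ(T)) ⊆ σᵣ(T) ∪ {0}`. -/
theorem right_spectrum_of_spherical_aluthge
    {H : Type*} [NormedAddCommGroup H] [InnerProductSpace ℂ H] [CompleteSpace H]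
    {d : ℕ} (hd : 1 ≤ d) (T V : Fin d → H →L[ℂ] H) (P : H →L[ℂ] H)
    (hcomm : ∀ i j, T i * T j = T j * T i)
    (hPpos : 0 ≤ P)
    (hP2 : P * P = ∑ i, star (T i) * T i)
    (hpolar : ∀ i, T i = V i * P)
    (hproj : ∑ i, star (V i) * V i =
      ((LinearMap.ker (P : H →ₗ[ℂ] H))ᗮ).subtypeL.comp
        ((LinearMap.ker (P : H →ₗ[ℂ] H))ᗮ).orthogonalProjectionOnto)
    (t : ℝ) (ht0 : 0 < t) (ht1 : t ≤ 1) :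
    (∀ lam : Fin d → ℂ,
      (∃ B : Fin d → H →L[ℂ] H,
        ∑ i, (CFC.rpow P t * V i * CFC.rpow P (1 - t) - lam i • 1) * B i = 1) →
      ∃ B : Fin d → H →L[ℂ] H, ∑ i, (T i - lam i • 1) * B i = 1) ∧
    (∀ lam : Fin d → ℂ, lam ≠ 0 →
      (∃ B : Fin d → H →L[ℂ] H, ∑ i, (T i - lam i • 1) * B i = 1) →
      ∃ B : Fin d → H →L[ℂ] H,
        ∑ i, (CFC.rpow P t * V i * CFC.rpow P (1 - t) - lam i • 1) * B i = 1) := by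
  have hPsa : IsSelfAdjoint P := IsSelfAdjoint.of_nonneg hPpos
  -- the support projection
  set E : H →L[ℂ] H :=
    ((LinearMap.ker (P : H →ₗ[ℂ] H))ᗮ).subtypeL.comp ((LinearMap.ker (P : H →ₗ[ℂ] H))ᗮ).orthogonalProjectionOnto with hEdef
  have hEapp : ∀ x : H, E x = (((LinearMap.ker (P : H →ₗ[ℂ] H))ᗮ).orthogonalProjectionOnto x : H) := fun x => rfl
  -- products of rpow's
  have hrpow_mul : ∀ x y : ℝ, 0 ≤ x → 0 ≤ y → x + y ≠ 0 →
      CFC.rpow P x * CFC.rpow P y = CFC.rpow P (x + y) := by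
    intro x y hx hy hxy
    have h1 : CFC.rpow P x = cfc (fun z : ℝ≥0 => z ^ x) P := rfl
    have h2 : CFC.rpow P y = cfc (fun z : ℝ≥0 => z ^ y) P := rfl
    have h3 : CFC.rpow P (x + y) = cfc (fun z : ℝ≥0 => z ^ (x + y)) P := rfl
    rw [h1, h2, h3, ← cfc_mul _ _ P (NNReal.continuousOn_rpow_const (Or.inr hx))
        (NNReal.continuousOn_rpow_const (Or.inr hy))]
    exact cfc_congr fun z _ => (NNReal.rpow_add' hxy z).symm
  have hRQ : CFC.rpow P (1 - t) * CFC.rpow P t = P := by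
    rw [hrpow_mul (1 - t) t (by linarith) ht0.le (by norm_num)]
    norm_num
    exact CFC.rpow_one P
  have hRQp : ∀ x : H, CFC.rpow P (1 - t) (CFC.rpow P t x) = P x := fun x => by
    rw [← ContinuousLinearMap.mul_apply, hRQ]
  -- powers of rpow
  have hpow : ∀ s : ℝ, 0 < s → ∀ m : ℕ,
      (CFC.rpow P s) ^ (m + 1) = CFC.rpow P ((m + 1 : ℕ) * s) := by
    intro s hs m
    induction m with
    | zero => rw [pow_one]; norm_num
    | succ k ih =>
        rw [pow_succ, ih, hrpow_mul _ s (by positivity) hs.le (by positivity)]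
        congr 1
        push_cast
        ring
  -- rpow's kill the kernel of P
  have hker : ∀ s : ℝ, 0 < s → ∀ z : H, P z = 0 → CFC.rpow P s z = 0 := by
    intro s hs z hz
    set n : ℕ := ⌈1 / s⌉₊ with hn
    have hns : 1 ≤ (n : ℝ) * s := by
      have h1 : 1 / s ≤ (n : ℝ) := Nat.le_ceil _
      calc (1 : ℝ) = (1 / s) * s := by field_simp
        _ ≤ n * s := mul_le_mul_of_nonneg_right h1 hs.le
    have hn1 : 1 ≤ n := by
      rcases Nat.eq_zero_or_pos n with h | h
      · rw [h] at hns; norm_num at hns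
      · exact h
    have hA : (CFC.rpow P s) ^ n = CFC.rpow P ((n : ℝ) * s) := by
      have h := hpow s hs (n - 1)
      rw [show n - 1 + 1 = n from by omega] at h
      exact h
    have hAz : ((CFC.rpow P s) ^ n) z = 0 := by
      rw [hA, show (n : ℝ) * s = ((n : ℝ) * s - 1) + 1 from by ring,
        ← hrpow_mul _ 1 (by linarith) zero_le_one (by linarith),
        ContinuousLinearMap.mul_apply, show CFC.rpow P 1 = P from CFC.rpow_one P, hz, map_zero]
    have hAn : ((CFC.rpow P s) ^ (n - 1 + 1)) z = 0 := by
      rwa [show n - 1 + 1 = n from by omega]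
    exact aux_descend (CFC.rpow P s)
      (IsSelfAdjoint.of_nonneg CFC.rpow_nonneg) (n - 1) z hAn
  -- x - E x lies in the kernel of P
  have hmem : ∀ x : H, P (x - E x) = 0 := by
    intro x
    have h1 : x - E x ∈ ((LinearMap.ker (P : H →ₗ[ℂ] H))ᗮ)ᗮ := by
      rw [hEapp]
      exact Submodule.sub_starProjection_mem_orthogonal x
    rw [Submodule.orthogonal_orthogonal] at h1
    exact h1
  -- V i kills the kernel of P
  have hVz : ∀ i, ∀ z : H, P z = 0 → V i z = 0 := by
    intro i z hz
    have hEz : E z = 0 := by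
      rw [hEapp, Submodule.orthogonalProjectionOnto_apply_of_mem_orthogonal
        (Submodule.le_orthogonal_orthogonal _ hz)]
      simp
    have h0 : (∑ k, star (V k) * V k) z = 0 := by rw [hproj]; exact hEz
    have h2 : ∀ k, (‖V k z‖ : ℝ) ^ 2 = RCLike.re ⟪(star (V k) * V k) z, z⟫ := fun k => by
      rw [ContinuousLinearMap.mul_apply, ContinuousLinearMap.star_eq_adjoint,
        ContinuousLinearMap.adjoint_inner_left]
      exact (inner_self_eq_norm_sq _).symm
    have h3 : ∑ k, (‖V k z‖ : ℝ) ^ 2 = 0 := by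
      calc ∑ k, (‖V k z‖ : ℝ) ^ 2
          = ∑ k, RCLike.re ⟪(star (V k) * V k) z, z⟫ :=
            Finset.sum_congr rfl fun k _ => h2 k
        _ = RCLike.re (∑ k, ⟪(star (V k) * V k) z, z⟫) :=
            (map_sum (AddMonoidHom.mk' (RCLike.re (K := ℂ)) (by simp)) _ _).symm
        _ = RCLike.re ⟪(∑ k, star (V k) * V k) z, z⟫ := by
            rw [ContinuousLinearMap.sum_apply, sum_inner]
        _ = 0 := by rw [h0, inner_zero_left]; exact map_zero _
    have h4 : ‖V i z‖ ^ 2 = 0 :=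
      (Finset.sum_eq_zero_iff_of_nonneg (fun k _ => sq_nonneg _)).mp h3 i (Finset.mem_univ i)
    have h5 : ‖V i z‖ = 0 := by
      have := sq_eq_zero_iff.mp h4
      exact this
    exact norm_eq_zero.mp h5
  -- pointwise facts
  have hVEp : ∀ i, ∀ x : H, V i (E x) = V i x := by
    intro i x
    have h := hVz i (x - E x) (hmem x)
    rw [map_sub] at h
    exact (sub_eq_zero.mp h).symm
  have hrpowEp : ∀ s : ℝ, 0 < s → ∀ x : H, CFC.rpow P s (E x) = CFC.rpow P s x := by
    intro s hs x
    have h := hker s hs (x - E x) (hmem x)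
    rw [map_sub] at h
    exact (sub_eq_zero.mp h).symm
  have hErpowp : ∀ s : ℝ, 0 < s → ∀ x : H, E (CFC.rpow P s x) = CFC.rpow P s x := by
    intro s hs x
    have hsa : IsSelfAdjoint (CFC.rpow P s) := IsSelfAdjoint.of_nonneg CFC.rpow_nonneg
    have hmemo : CFC.rpow P s x ∈ (LinearMap.ker (P : H →ₗ[ℂ] H))ᗮ := by
      rw [Submodule.mem_orthogonal]
      intro u hu
      have hQu : CFC.rpow P s u = 0 := hker s hs u hu
      calc ⟪u, CFC.rpow P s x⟫
          = ⟪(ContinuousLinearMap.adjoint (CFC.rpow P s)) u, x⟫ := by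
            rw [ContinuousLinearMap.adjoint_inner_left]
        _ = ⟪CFC.rpow P s u, x⟫ := by rw [hsa.adjoint_eq]
        _ = 0 := by rw [hQu, inner_zero_left]
    rw [hEapp]; exact Submodule.starProjection_eq_self_iff.mpr hmemo
  -- the swap fact coming from commutativity
  have hDEp : ∀ i j, ∀ x : H, V i (P (V j (E x))) = V j (P (V i (E x))) := by
    intro i j x
    set D : H →L[ℂ] H := V i * P * V j - V j * P * V i with hD
    have hDP : ∀ z : H, D (P z) = 0 := by
      intro z
      have h := congrArg (fun S : H →L[ℂ] H => S z) (hcomm i j)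
      simp only [hpolar i, hpolar j, ContinuousLinearMap.mul_apply] at h
      simp only [hD, ContinuousLinearMap.sub_apply, ContinuousLinearMap.mul_apply]
      rw [h, sub_self]
    have hip : ∀ u w : H, ⟪P u, w⟫ = ⟪u, P w⟫ := fun u w => by
      nth_rewrite 1 [← hPsa.adjoint_eq]
      exact ContinuousLinearMap.adjoint_inner_left P w u
    have hkerP : LinearMap.ker (P : H →ₗ[ℂ] H) = (LinearMap.range (P : H →ₗ[ℂ] H))ᗮ := by
      ext v
      constructor
      · intro hv
        rw [Submodule.mem_orthogonal]
        rintro u ⟨y, rfl⟩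
        change ⟪P y, v⟫ = 0
        rw [hip y v, show P v = 0 from LinearMap.mem_ker.mp hv, inner_zero_right]
      · intro hv
        rw [LinearMap.mem_ker]
        have h2 : ⟪P (P v), v⟫ = 0 := by
          rw [Submodule.mem_orthogonal] at hv
          exact hv (P (P v)) ⟨P v, rfl⟩
        exact inner_self_eq_zero.mp ((hip (P v) v).symm.trans h2)
    have hle : (LinearMap.ker (P : H →ₗ[ℂ] H))ᗮ ≤ LinearMap.ker (D : H →ₗ[ℂ] H) := by
      rw [hkerP, Submodule.orthogonal_orthogonal_eq_closure]
      exact Submodule.topologicalClosure_minimal _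
        (by rintro _ ⟨z, rfl⟩; exact LinearMap.mem_ker.mpr (hDP z))
        (ContinuousLinearMap.isClosed_ker D)
    have hDE : D (E x) = 0 := by
      apply hle
      rw [hEapp]
      exact Submodule.coe_mem _
    simp only [hD, ContinuousLinearMap.sub_apply, ContinuousLinearMap.mul_apply] at hDE
    exact sub_eq_zero.mp hDE
  have hREswap : ∀ x : H, CFC.rpow P (1 - t) (E x) = E (CFC.rpow P (1 - t) x) := by
    intro x
    rcases eq_or_lt_of_le ht1 with h | h
    · have h0 : (1 : ℝ) - t = 0 := by rw [← h]; ring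
      have hR1 : CFC.rpow P (1 - t) = 1 := by rw [h0]; exact CFC.rpow_zero P
      rw [hR1, ContinuousLinearMap.one_apply, ContinuousLinearMap.one_apply]
    · have hs : 0 < 1 - t := by linarith
      rw [hrpowEp (1 - t) hs x, hErpowp (1 - t) hs x]
  constructor
  · -- σᵣ(T) ⊆ σᵣ(Δₜ(T))
    rintro lam ⟨B, hB⟩
    by_cases hlam : lam = 0
    · subst hlam
      simp only [Pi.zero_apply, zero_smul, sub_zero] at hB ⊢
      set X : H →L[ℂ] H := ∑ k, V k * CFC.rpow P (1 - t) * B k with hX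
      have hQX : CFC.rpow P t * X = 1 := by
        rw [hX, Finset.mul_sum, ← hB]
        exact Finset.sum_congr rfl fun k _ => by rw [← mul_assoc, ← mul_assoc]
      have hQsa : star (CFC.rpow P t) = CFC.rpow P t :=
        IsSelfAdjoint.of_nonneg CFC.rpow_nonneg
      have h1 : star X * CFC.rpow P t = 1 := by
        have h := congrArg star hQX
        rwa [star_mul, hQsa, star_one] at h
      have hXQ : X * CFC.rpow P t = 1 := by
        have h2 : X = star X := by
          calc X = 1 * X := (one_mul X).symm
            _ = (star X * CFC.rpow P t) * X := by rw [h1]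
            _ = star X * (CFC.rpow P t * X) := mul_assoc _ _ _
            _ = star X := by rw [hQX, mul_one]
        rw [h2]
        exact h1
      refine ⟨fun i => X * B i * CFC.rpow P t, ?_⟩
      have hPX : P * X = CFC.rpow P (1 - t) := by
        calc P * X = (CFC.rpow P (1 - t) * CFC.rpow P t) * X := by rw [hRQ]
          _ = CFC.rpow P (1 - t) * (CFC.rpow P t * X) := mul_assoc _ _ _
          _ = CFC.rpow P (1 - t) := by rw [hQX, mul_one]
      calc ∑ i, T i * (X * B i * CFC.rpow P t)
          = ∑ i, V i * CFC.rpow P (1 - t) * B i * CFC.rpow P t := by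
            refine Finset.sum_congr rfl fun i _ => ?_
            rw [hpolar i]
            calc (V i * P) * (X * B i * CFC.rpow P t)
                = ((V i * P) * X) * B i * CFC.rpow P t := by
                  rw [← mul_assoc, ← mul_assoc]
              _ = (V i * (P * X)) * B i * CFC.rpow P t := by rw [mul_assoc (V i) P X]
              _ = V i * CFC.rpow P (1 - t) * B i * CFC.rpow P t := by rw [hPX]
        _ = (∑ i, V i * CFC.rpow P (1 - t) * B i) * CFC.rpow P t := (Finset.sum_mul _ _ _).symm
        _ = 1 := by rw [← hX, hXQ]
    · obtain ⟨j, hj⟩ := Function.ne_iff.mp hlam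
      have hint : ∀ i, (V j * CFC.rpow P (1 - t) * E) *
          (CFC.rpow P t * V i * CFC.rpow P (1 - t)) = T i *
          (V j * CFC.rpow P (1 - t) * E) := by
        intro i
        rw [hpolar i]
        ext x
        simp only [ContinuousLinearMap.mul_apply]
        rw [hErpowp t ht0, hRQp, hREswap x, hDEp i j, hVEp i]
      have hq : (V j * CFC.rpow P (1 - t) * E) * CFC.rpow P t = T j := by
        rw [hpolar j]
        ext x
        simp only [ContinuousLinearMap.mul_apply]
        rw [hErpowp t ht0, hRQp]
      exact aux_sum_trick (fun i => CFC.rpow P t * V i * CFC.rpow P (1 - t)) T lam j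
        (by simpa using hj) (V j * CFC.rpow P (1 - t) * E) (CFC.rpow P t) hint hq B hB
  · -- σᵣ(Δₜ(T)) ⊆ σᵣ(T) ∪ {0}
    rintro lam hlam ⟨B, hB⟩
    obtain ⟨j, hj⟩ := Function.ne_iff.mp hlam
    have hint : ∀ i, CFC.rpow P t * T i =
        (CFC.rpow P t * V i * CFC.rpow P (1 - t)) * CFC.rpow P t := by
      intro i
      rw [hpolar i]
      ext x
      simp only [ContinuousLinearMap.mul_apply]
      rw [hRQp]
    have hq : CFC.rpow P t * (V j * CFC.rpow P (1 - t)) =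
        CFC.rpow P t * V j * CFC.rpow P (1 - t) := (mul_assoc _ _ _).symm
    exact aux_sum_trick T (fun i => CFC.rpow P t * V i * CFC.rpow P (1 - t)) lam j
      (by simpa using hj) (CFC.rpow P t) (V j * CFC.rpow P (1 - t)) hint hq B hB
end

section
/- Let 0 < t < 1. If the tuple T is right invertible but the tuple Δ_t(T) = (P^t V_1 P^{1−t}, …, P^t V_d P^{1−t}) is not right invertible, then neither T nor Δ_t(T) is left invertible (equivalently, 0 belongs to the left spectrum of both T and Δ_t(T)). -/
/-- A self-adjoint left-invertible element of a star ring is a unit. -/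
lemma isUnit_of_selfAdjoint_left_inv {A : Type*} [Ring A] [StarRing A]
    {a c : A} (ha : IsSelfAdjoint a) (h : c * a = 1) : IsUnit a := by
  have h2 : a * star c = 1 := by
    have := congrArg star h
    simpa [star_mul, ha.star_eq] using this
  have hce : c = star c := by
    calc c = c * (a * star c) := by rw [h2, mul_one]
    _ = (c * a) * star c := by rw [mul_assoc]
    _ = star c := by rw [h, one_mul]
  exact ⟨⟨a, c, by rw [hce]; exact h2, h⟩, rfl⟩

/-- For `0 < t < 1`: if `T` is right invertible but `Δₜ(T)` is not, then neither `T` nor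
`Δₜ(T)` is left invertible. -/
theorem zero_in_left_spectra_of_spherical_aluthge
    {H : Type*} [NormedAddCommGroup H] [InnerProductSpace ℂ H] [CompleteSpace H]
    {d : ℕ} (hd : 1 ≤ d) (T V : Fin d → H →L[ℂ] H) (P : H →L[ℂ] H)
    (hcomm : ∀ i j, T i * T j = T j * T i)
    (hPpos : 0 ≤ P)
    (hP2 : P * P = ∑ i, star (T i) * T i)
    (hpolar : ∀ i, T i = V i * P)
    (hproj : ∑ i, star (V i) * V i =
      ((LinearMap.ker (P : H →ₗ[ℂ] H))ᗮ).subtypeL.comp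
        (Submodule.orthogonalProjectionOnto (LinearMap.ker (P : H →ₗ[ℂ] H))ᗮ))
    (t : ℝ) (ht0 : 0 < t) (ht1 : t < 1)
    (hTright : ∃ B : Fin d → H →L[ℂ] H, ∑ i, T i * B i = 1)
    (hnot : ¬ ∃ B : Fin d → H →L[ℂ] H,
      ∑ i, (CFC.rpow P t * V i * CFC.rpow P (1 - t)) * B i = 1) :
    (¬ ∃ A : Fin d → H →L[ℂ] H, ∑ i, A i * T i = 1) ∧
    (¬ ∃ A : Fin d → H →L[ℂ] H,
      ∑ i, A i * (CFC.rpow P t * V i * CFC.rpow P (1 - t)) = 1) := by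
  -- Key claim: P is not a unit.
  have hPnotunit : ¬ IsUnit P := by
    intro hUnit
    have h0 : (0 : NNReal) ∉ spectrum NNReal P := spectrum.zero_notMem NNReal hUnit
    obtain ⟨B, hB⟩ := hTright
    apply hnot
    refine ⟨fun i => CFC.rpow P t * B i * CFC.rpow P (-t), ?_⟩
    have hsplit : CFC.rpow P (1 - t) = P * CFC.rpow P (-t) := by
      have h := CFC.rpow_add (a := P) (x := 1) (y := -t) hUnit
      rw [show (1 : ℝ) + -t = 1 - t by ring, CFC.rpow_one P] at h
      exact h
    have hcancel : CFC.rpow P (-t) * CFC.rpow P t = 1 := CFC.rpow_neg_mul_rpow t (hUnit.isStrictlyPositive hPpos)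
    have hcancel' : CFC.rpow P t * CFC.rpow P (-t) = 1 := CFC.rpow_mul_rpow_neg t (hUnit.isStrictlyPositive hPpos)
    have hstep : ∀ i, (CFC.rpow P t * V i * CFC.rpow P (1 - t)) *
        (CFC.rpow P t * B i * CFC.rpow P (-t)) =
        CFC.rpow P t * (T i * (B i * CFC.rpow P (-t))) := by
      intro i
      rw [hpolar i, hsplit]
      simp only [mul_assoc]
      rw [← mul_assoc (CFC.rpow P (-t)) (CFC.rpow P t), hcancel, one_mul]
    calc ∑ i, (CFC.rpow P t * V i * CFC.rpow P (1 - t)) *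
          (CFC.rpow P t * B i * CFC.rpow P (-t))
        = ∑ i, CFC.rpow P t * (T i * B i * CFC.rpow P (-t)) := by
          refine Finset.sum_congr rfl fun i _ => ?_
          rw [hstep i, mul_assoc (T i)]
      _ = CFC.rpow P t * ((∑ i, T i * B i) * CFC.rpow P (-t)) := by
          rw [Finset.sum_mul, Finset.mul_sum]
      _ = 1 := by rw [hB, one_mul]; exact hcancel'
  constructor
  · rintro ⟨A, hA⟩
    apply hPnotunit
    have hCP : (∑ i, A i * V i) * P = 1 := by
      rw [Finset.sum_mul, ← hA]
      exact Finset.sum_congr rfl fun i _ => by rw [hpolar i, mul_assoc]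
    exact isUnit_of_selfAdjoint_left_inv (IsSelfAdjoint.of_nonneg hPpos) hCP
  · rintro ⟨A, hA⟩
    apply hPnotunit
    have hQnonneg : 0 ≤ CFC.rpow P (1 - t) := CFC.rpow_nonneg
    have hCQ : (∑ i, A i * (CFC.rpow P t * V i)) * CFC.rpow P (1 - t) = 1 := by
      rw [Finset.sum_mul, ← hA]
      exact Finset.sum_congr rfl fun i _ => by simp only [mul_assoc]
    have hQunit : IsUnit (CFC.rpow P (1 - t)) :=
      isUnit_of_selfAdjoint_left_inv (IsSelfAdjoint.of_nonneg hQnonneg) hCQ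
    have hQ0 : (0 : NNReal) ∉ spectrum NNReal (CFC.rpow P (1 - t)) :=
      spectrum.zero_notMem NNReal hQunit
    have h1t : (0 : ℝ) ≤ 1 - t := by linarith
    have h1t' : (1 : ℝ) - t ≠ 0 := ne_of_gt (by linarith)
    have hPeq : CFC.rpow (CFC.rpow P (1 - t)) (1 / (1 - t)) = P := by
      have h := CFC.rpow_rpow_of_exponent_nonneg P (1 - t) (1 / (1 - t)) h1t
        (by positivity) hPpos
      rw [mul_one_div, div_self h1t', CFC.rpow_one P] at h
      exact h
    rw [← hPeq]
    exact ⟨⟨_, _, CFC.rpow_mul_rpow_neg _ (hQunit.isStrictlyPositive hQnonneg), CFC.rpow_neg_mul_rpow _ (hQunit.isStrictlyPositive hQnonneg)⟩, rfl⟩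
end

section
/- Let 0 < t ≤ 1. Then ‖Δ_t(T)‖₂ ≤ ‖T‖₂; that is, ‖Σ_{i=1}^{d} (P^t V_i P^{1−t})^* (P^t V_i P^{1−t})‖ ≤ ‖T_1^*T_1 + ⋯ + T_d^*T_d‖ = ‖P‖². -/
open scoped NNReal

/-- Norm bound for real powers of a nonneg operator: `‖P^s‖₊ ≤ ‖P‖₊^s` for `0 ≤ s`. -/
lemma aux_nnnorm_rpow_le {H : Type*} [NormedAddCommGroup H] [InnerProductSpace ℂ H]
    [CompleteSpace H] [Nontrivial H] (P : H →L[ℂ] H) (hP : 0 ≤ P) {s : ℝ} (hs : 0 ≤ s) :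
    ‖CFC.rpow P s‖₊ ≤ ‖P‖₊ ^ s := by
  show ‖cfc (fun x : ℝ≥0 => x ^ s) P‖₊ ≤ ‖P‖₊ ^ s
  exact nnnorm_cfc_nnreal_le fun x hx =>
    NNReal.rpow_le_rpow (spectrum.le_nnnorm_of_mem hx) hs

set_option maxHeartbeats 1000000 in
set_option synthInstance.maxHeartbeats 400000 in
/-- For `0 < t ≤ 1`, `‖Δₜ(T)‖₂ ≤ ‖T‖₂`, in the squared form
`‖Σᵢ (Pᵗ Vᵢ P^{1-t})^* (Pᵗ Vᵢ P^{1-t})‖ ≤ ‖Σᵢ Tᵢ^* Tᵢ‖ = ‖P‖²`. -/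
theorem norm2_of_spherical_aluthge_le
    {H : Type*} [NormedAddCommGroup H] [InnerProductSpace ℂ H] [CompleteSpace H]
    {d : ℕ} (hd : 1 ≤ d) (T V : Fin d → H →L[ℂ] H) (P : H →L[ℂ] H)
    (hcomm : ∀ i j, T i * T j = T j * T i)
    (hPpos : 0 ≤ P)
    (hP2 : P * P = ∑ i, star (T i) * T i)
    (hpolar : ∀ i, T i = V i * P)
    (hproj : ∑ i, star (V i) * V i =
      ((LinearMap.ker (P : H →ₗ[ℂ] H))ᗮ).subtypeL.comp
        (LinearMap.ker (P : H →ₗ[ℂ] H))ᗮ.orthogonalProjectionOnto)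
    (t : ℝ) (ht0 : 0 < t) (ht1 : t ≤ 1) :
    ‖∑ i, star (CFC.rpow P t * V i * CFC.rpow P (1 - t)) *
        (CFC.rpow P t * V i * CFC.rpow P (1 - t))‖ ≤ ‖∑ i, star (T i) * T i‖ ∧
      ‖∑ i, star (T i) * T i‖ = ‖P‖ ^ 2 := by
  obtain hH | hH := subsingleton_or_nontrivial H
  · have hz : ∀ f : H →L[ℂ] H, f = 0 := fun f => Subsingleton.elim _ _
    constructor
    · rw [hz (∑ i, star (CFC.rpow P t * V i * CFC.rpow P (1 - t)) *
        (CFC.rpow P t * V i * CFC.rpow P (1 - t))),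
        hz (∑ i, star (T i) * T i)]
    · rw [hz (∑ i, star (T i) * T i), hz P]
      simp
  have hPsa : IsSelfAdjoint P := IsSelfAdjoint.of_nonneg hPpos
  have hnorm : ‖∑ i, star (T i) * T i‖ = ‖P‖ ^ 2 := by
    calc ‖∑ i, star (T i) * T i‖ = ‖star P * P‖ := by rw [← hP2, hPsa.star_eq]
    _ = ‖P‖ ^ 2 := by rw [CStarRing.norm_star_mul_self, sq]
  refine ⟨?_, hnorm⟩
  rw [hnorm]
  set A1 : H →L[ℂ] H := CFC.rpow P t with hA1def
  set B : H →L[ℂ] H := CFC.rpow P (1 - t) with hBdef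
  have hA1nn : (0 : H →L[ℂ] H) ≤ A1 := CFC.rpow_nonneg
  have hBnn : (0 : H →L[ℂ] H) ≤ B := CFC.rpow_nonneg
  have hBsa : IsSelfAdjoint B := IsSelfAdjoint.of_nonneg hBnn
  set c : ℝ := ‖A1‖ ^ 2 with hcdef
  have hc0 : 0 ≤ c := sq_nonneg _
  set Q : H →L[ℂ] H := ∑ i, star (V i) * V i with hQdef
  have hQnn : (0 : H →L[ℂ] H) ≤ Q := Finset.sum_nonneg fun i _ => star_mul_self_nonneg _
  have hQnorm : ‖Q‖ ≤ 1 := by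
    rw [hproj]
    refine (ContinuousLinearMap.opNorm_comp_le _ _).trans ?_
    calc ‖((LinearMap.ker (P : H →ₗ[ℂ] H))ᗮ).subtypeL‖ * ‖((LinearMap.ker (P : H →ₗ[ℂ] H))ᗮ.orthogonalProjectionOnto : H →L[ℂ] _)‖
        ≤ 1 * 1 := by
          gcongr
          · exact Submodule.norm_subtypeL_le _
          · exact Submodule.orthogonalProjectionOnto_norm_le _
    _ = 1 := by norm_num
  have hQle1 : Q ≤ 1 := (CStarAlgebra.norm_le_one_iff_of_nonneg Q hQnn).mp hQnorm
  -- the main estimate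
  have hrewrite : ∀ i, star (A1 * V i * B) * (A1 * V i * B)
      = B * (star (V i) * (star A1 * A1) * V i) * B := by
    intro i
    simp only [star_mul, hBsa.star_eq, mul_assoc]
  have h2 : ∀ i, star (V i) * (star A1 * A1) * V i ≤ c • (star (V i) * V i) := by
    intro i
    have h := star_left_conjugate_le_conjugate
      (CStarAlgebra.star_mul_le_algebraMap_norm_sq (a := A1)) (V i)
    rw [Algebra.algebraMap_eq_smul_one] at h
    simpa [mul_smul_comm, smul_mul_assoc, ← hcdef] using h
  have h3 : ∑ i, star (A1 * V i * B) * (A1 * V i * B)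
      ≤ c • (B * Q * B) := by
    have hsum : ∑ i, star (A1 * V i * B) * (A1 * V i * B)
        ≤ ∑ i, B * (c • (star (V i) * V i)) * B := by
      refine Finset.sum_le_sum fun i _ => ?_
      rw [hrewrite i]
      exact hBsa.conjugate_le_conjugate (h2 i)
    refine hsum.trans_eq ?_
    rw [hQdef]
    simp [Finset.mul_sum, Finset.sum_mul, Finset.smul_sum, mul_smul_comm, smul_mul_assoc]
  have h4 : c • (B * Q * B) ≤ c • (B * B) := by
    refine smul_le_smul_of_nonneg_left ?_ hc0
    have := hBsa.conjugate_le_conjugate hQle1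
    simpa [mul_one] using this
  have hS_nonneg : (0 : H →L[ℂ] H)
      ≤ ∑ i, star (A1 * V i * B) * (A1 * V i * B) :=
    Finset.sum_nonneg fun i _ => star_mul_self_nonneg _
  have hmain : ‖∑ i, star (A1 * V i * B) * (A1 * V i * B)‖ ≤ c * ‖B‖ ^ 2 := by
    calc ‖∑ i, star (A1 * V i * B) * (A1 * V i * B)‖
        ≤ ‖c • (B * B)‖ :=
          CStarAlgebra.norm_le_norm_of_nonneg_of_le hS_nonneg (h3.trans h4)
    _ = c * ‖B * B‖ := by rw [norm_smul, Real.norm_of_nonneg hc0]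
    _ ≤ c * (‖B‖ * ‖B‖) := by
          have := norm_mul_le B B
          exact mul_le_mul_of_nonneg_left this hc0
    _ = c * ‖B‖ ^ 2 := by rw [sq]
  -- bound c * ‖B‖² by ‖P‖²
  have hA1le : ‖A1‖ ≤ ‖P‖ ^ t := by
    have h := aux_nnnorm_rpow_le P hPpos ht0.le
    calc ‖A1‖ = ((‖A1‖₊ : ℝ≥0) : ℝ) := rfl
    _ ≤ ((‖P‖₊ ^ t : ℝ≥0) : ℝ) := by exact_mod_cast h
    _ = ‖P‖ ^ t := by rw [NNReal.coe_rpow]; rfl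
  have hBle : ‖B‖ ≤ ‖P‖ ^ (1 - t) := by
    have h := aux_nnnorm_rpow_le P hPpos (by linarith : (0:ℝ) ≤ 1 - t)
    calc ‖B‖ = ((‖B‖₊ : ℝ≥0) : ℝ) := rfl
    _ ≤ ((‖P‖₊ ^ (1 - t) : ℝ≥0) : ℝ) := by exact_mod_cast h
    _ = ‖P‖ ^ (1 - t) := by rw [NNReal.coe_rpow]; rfl
  refine hmain.trans ?_
  have hfin : c * ‖B‖ ^ 2 ≤ (‖P‖ ^ t) ^ 2 * (‖P‖ ^ (1 - t)) ^ 2 := by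
    rw [hcdef]
    exact mul_le_mul (pow_le_pow_left₀ (norm_nonneg _) hA1le 2)
      (pow_le_pow_left₀ (norm_nonneg _) hBle 2) (sq_nonneg _) (sq_nonneg _)
  refine hfin.trans_eq ?_
  rw [← mul_pow, ← Real.rpow_add' (norm_nonneg P) (by norm_num)]
  norm_num
end

section
/- Let 0 ≤ t ≤ 1 and let (T_n)_{n≥0} be a generalized Aluthge iteration sequence for T with parameter t. Then there exists a real number s with r(T) ≤ s ≤ ‖T‖ such that the sequence of operator norms ‖T_n‖ = ‖Δ_t^{(n)}(T)‖ converges to s as n → ∞. -/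
open Filter Topology NNReal ENNReal

section AluthgeAux

variable {H : Type*} [NormedAddCommGroup H] [InnerProductSpace ℂ H] [CompleteSpace H]

omit [CompleteSpace H] in
lemma aluthge_spectralRadius_eq_sup_nonzero (a : H →L[ℂ] H) :
    spectralRadius ℂ a = ⨆ k ∈ (spectrum ℂ a \ {0} : Set ℂ), (‖k‖₊ : ℝ≥0∞) := by
  rw [spectralRadius]
  apply le_antisymm
  · refine iSup₂_le fun k hk => ?_
    rcases eq_or_ne k 0 with rfl | h
    · simp
    · exact le_iSup₂ (f := fun k (_ : k ∈ (spectrum ℂ a \ {0} : Set ℂ)) => (‖k‖₊ : ℝ≥0∞)) k ⟨hk, h⟩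
  · exact iSup₂_le fun k hk =>
      le_iSup₂ (f := fun k (_ : k ∈ spectrum ℂ a) => (‖k‖₊ : ℝ≥0∞)) k hk.1

omit [CompleteSpace H] in
lemma aluthge_spectralRadius_mul_comm (a b : H →L[ℂ] H) :
    spectralRadius ℂ (a * b) = spectralRadius ℂ (b * a) := by
  rw [aluthge_spectralRadius_eq_sup_nonzero, aluthge_spectralRadius_eq_sup_nonzero,
    spectrum.nonzero_mul_comm]

lemma aluthge_rpow_mul_rpow_eq (P : H →L[ℂ] H) (hP : 0 ≤ P) {a b : ℝ} (ha : 0 ≤ a) (hb : 0 ≤ b)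
    (hab : a + b = 1) :
    CFC.rpow P a * CFC.rpow P b = P := by
  have hca : Continuous fun x : ℝ≥0 => x ^ a := NNReal.continuous_rpow_const ha
  have hcb : Continuous fun x : ℝ≥0 => x ^ b := NNReal.continuous_rpow_const hb
  rw [CFC.rpow_eq_pow, CFC.rpow_eq_pow, CFC.rpow_def, CFC.rpow_def,
    ← cfc_mul _ _ P (hca.continuousOn) (hcb.continuousOn)]
  calc cfc (fun x : ℝ≥0 => x ^ a * x ^ b) P = cfc (id : ℝ≥0 → ℝ≥0) P := by
        refine cfc_congr fun x _ => ?_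
        rw [← NNReal.rpow_add' (by rw [hab]; norm_num) x, hab, NNReal.rpow_one, id]
    _ = P := cfc_id ℝ≥0 P

lemma aluthge_norm_rpow_le [Nontrivial H] (P : H →L[ℂ] H) (hP : 0 ≤ P) {r : ℝ} (hr : 0 ≤ r) :
    ‖CFC.rpow P r‖ ≤ ‖P‖ ^ r := by
  rw [CFC.rpow_eq_pow, CFC.rpow_def, cfc_nnreal_eq_real _ P hP]
  refine norm_cfc_le (Real.rpow_nonneg (norm_nonneg P) r) fun x hx => ?_
  have h1 : x.toNNReal ≤ ‖P‖₊ := by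
    have := spectrum.norm_le_norm_of_mem hx
    exact Real.toNNReal_le_iff_le_coe.mpr ((le_abs_self x).trans this)
  have h2 : x.toNNReal ^ r ≤ ‖P‖₊ ^ r := NNReal.rpow_le_rpow h1 hr
  calc ‖((x.toNNReal ^ r : ℝ≥0) : ℝ)‖ = ((x.toNNReal ^ r : ℝ≥0) : ℝ) :=
        Real.norm_of_nonneg (by positivity)
    _ ≤ ((‖P‖₊ ^ r : ℝ≥0) : ℝ) := by exact_mod_cast h2
    _ = ‖P‖ ^ r := by rw [NNReal.coe_rpow, coe_nnnorm]

end AluthgeAux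

/-- For `0 ≤ t ≤ 1`, the norms of the iterates of the generalized Aluthge transform of a
single operator `T` converge to some `s` with `r(T) ≤ s ≤ ‖T‖`. -/
theorem aluthge_iteration_norms_converge
    {t : ℝ} (ht0 : 0 ≤ t) (ht1 : t ≤ 1)
    {H : Type*} [NormedAddCommGroup H] [InnerProductSpace ℂ H] [CompleteSpace H]
    (T : H →L[ℂ] H) (Tseq : ℕ → H →L[ℂ] H) (h0 : Tseq 0 = T)
    (hstep : ∀ n, ∃ Pn Vn : H →L[ℂ] H, 0 ≤ Pn ∧ Pn * Pn = star (Tseq n) * Tseq n ∧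
      Tseq n = Vn * Pn ∧
      star Vn * Vn =
        ((LinearMap.ker (Pn : H →ₗ[ℂ] H))ᗮ).subtypeL.comp
          (Submodule.orthogonalProjectionOnto (LinearMap.ker (Pn : H →ₗ[ℂ] H))ᗮ) ∧
      Tseq (n + 1) = CFC.rpow Pn t * Vn * CFC.rpow Pn (1 - t)) :
    ∃ s : ℝ, spectralRadius ℂ T ≤ ENNReal.ofReal s ∧ s ≤ ‖T‖ ∧
      Tendsto (fun n => ‖Tseq n‖) atTop (𝓝 s) := by
  rcases subsingleton_or_nontrivial H with hH | hH
  · -- trivial Hilbert space: everything is zero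
    have hzero : ∀ S : H →L[ℂ] H, S = 0 := fun S => Subsingleton.elim _ _
    refine ⟨0, ?_, by simpa using norm_nonneg T, ?_⟩
    · have hspec : spectrum ℂ T = ∅ := by
        ext z
        simp [spectrum.mem_iff, isUnit_of_subsingleton]
      simp [spectralRadius, hspec]
    · have : ∀ n, ‖Tseq n‖ = 0 := fun n => by rw [hzero (Tseq n), norm_zero]
      simpa [this] using (tendsto_const_nhds : Tendsto (fun _ : ℕ => (0 : ℝ)) atTop (𝓝 0))
  · -- main case
    have key : ∀ n, ‖Tseq (n + 1)‖ ≤ ‖Tseq n‖ ∧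
        spectralRadius ℂ (Tseq (n + 1)) = spectralRadius ℂ (Tseq n) := by
      intro n
      obtain ⟨P, V, hP, hPP, hTVP, hVV, hT1⟩ := hstep n
      have hPsa : star P = P := hP.isSelfAdjoint.star_eq
      have hnormP : ‖P‖ = ‖Tseq n‖ := by
        have h1 : ‖P‖ * ‖P‖ = ‖Tseq n‖ * ‖Tseq n‖ := by
          calc ‖P‖ * ‖P‖ = ‖star P * P‖ := CStarRing.norm_star_mul_self.symm
            _ = ‖P * P‖ := by rw [hPsa]
            _ = ‖star (Tseq n) * Tseq n‖ := by rw [hPP]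
            _ = ‖Tseq n‖ * ‖Tseq n‖ := CStarRing.norm_star_mul_self
        rcases mul_self_eq_mul_self_iff.mp h1 with h | h
        · exact h
        · nlinarith [norm_nonneg P, norm_nonneg (Tseq n)]
      have hV : ‖V‖ ≤ 1 := by
        have h2 : ‖V‖ * ‖V‖ = ‖star V * V‖ := CStarRing.norm_star_mul_self.symm
        have h3 : ‖star V * V‖ ≤ 1 := by
          rw [hVV]
          refine ContinuousLinearMap.opNorm_le_bound _ zero_le_one fun x => ?_
          simp only [ContinuousLinearMap.coe_comp', Function.comp_apply,
            Submodule.coe_subtypeL', Submodule.coe_subtype, one_mul]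
          calc ‖((Submodule.orthogonalProjectionOnto (LinearMap.ker (P : H →ₗ[ℂ] H))ᗮ) x : H)‖
              = ‖(Submodule.orthogonalProjectionOnto (LinearMap.ker (P : H →ₗ[ℂ] H))ᗮ) x‖ := rfl
            _ ≤ ‖(Submodule.orthogonalProjectionOnto (LinearMap.ker (P : H →ₗ[ℂ] H))ᗮ : H →L[ℂ] _)‖ * ‖x‖ :=
                ContinuousLinearMap.le_opNorm _ x
            _ ≤ 1 * ‖x‖ := by
                gcongr
                exact Submodule.orthogonalProjectionOnto_norm_le _
            _ = ‖x‖ := one_mul _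
        nlinarith [norm_nonneg V]
      constructor
      · rw [hT1]
        have hA : ‖CFC.rpow P t‖ ≤ ‖P‖ ^ t := aluthge_norm_rpow_le P hP ht0
        have hB : ‖CFC.rpow P (1 - t)‖ ≤ ‖P‖ ^ (1 - t) := aluthge_norm_rpow_le P hP (by linarith)
        have habs : t + (1 - t) = 1 := by ring
        calc ‖CFC.rpow P t * V * CFC.rpow P (1 - t)‖
            ≤ ‖CFC.rpow P t * V‖ * ‖CFC.rpow P (1 - t)‖ := norm_mul_le _ _
          _ ≤ (‖CFC.rpow P t‖ * ‖V‖) * ‖CFC.rpow P (1 - t)‖ := by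
              gcongr
              exact norm_mul_le _ _
          _ ≤ (‖P‖ ^ t * 1) * ‖P‖ ^ (1 - t) := by gcongr
          _ = ‖P‖ ^ (t + (1 - t)) := by
              rw [mul_one, ← Real.rpow_add' (norm_nonneg P) (by rw [habs]; norm_num)]
          _ = ‖Tseq n‖ := by rw [habs, Real.rpow_one, hnormP]
      · have e1 : CFC.rpow P (1 - t) * CFC.rpow P t = P :=
          aluthge_rpow_mul_rpow_eq P hP (by linarith) ht0 (by ring)
        calc spectralRadius ℂ (Tseq (n + 1))
            = spectralRadius ℂ (CFC.rpow P t * (V * CFC.rpow P (1 - t))) := by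
              rw [hT1, mul_assoc]
          _ = spectralRadius ℂ ((V * CFC.rpow P (1 - t)) * CFC.rpow P t) :=
              aluthge_spectralRadius_mul_comm _ _
          _ = spectralRadius ℂ (V * P) := by rw [mul_assoc, e1]
          _ = spectralRadius ℂ (Tseq n) := by rw [← hTVP]
    have anti : Antitone fun n => ‖Tseq n‖ := antitone_nat_of_succ_le fun n => (key n).1
    have hbdd : BddBelow (Set.range fun n => ‖Tseq n‖) :=
      ⟨0, by rintro x ⟨n, rfl⟩; exact norm_nonneg _⟩
    have htend := tendsto_atTop_ciInf anti hbdd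
    set s := ⨅ n, ‖Tseq n‖ with hs
    have hs0 : (0 : ℝ) ≤ s := le_ciInf fun n => norm_nonneg _
    have hsr_all : ∀ n, spectralRadius ℂ (Tseq n) = spectralRadius ℂ T := by
      intro n
      induction n with
      | zero => rw [h0]
      | succ n ih => rw [(key n).2, ih]
    refine ⟨s, ?_, ?_, htend⟩
    · have hne : spectralRadius ℂ T ≠ ⊤ :=
        ne_top_of_le_ne_top ENNReal.coe_ne_top (spectrum.spectralRadius_le_nnnorm (𝕜 := ℂ) T)
      rw [ENNReal.le_ofReal_iff_toReal_le hne hs0]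
      refine le_ciInf fun n => ?_
      have h4 : spectralRadius ℂ T ≤ (‖Tseq n‖₊ : ℝ≥0∞) := by
        rw [← hsr_all n]; exact spectrum.spectralRadius_le_nnnorm (𝕜 := ℂ) (Tseq n)
      simpa using ENNReal.toReal_mono ENNReal.coe_ne_top h4
    · have := ciInf_le hbdd 0
      rwa [h0] at this
end
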